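/- arXiv:1112.5750 — 7 statements merged into one kernel-verified Lean document; each statement's English description precedes it below -/
import Mathlib

section
/- An operator φ : E → F between normed spaces is an isometry if and only if its adjoint φ* : F* → E* maps the closed unit ball of F* onto the closed unit ball of E*. -/
/-- An operator `φ : E → F` between normed spaces is an isometry if and only if its adjoint
`φ* : F* → E*`, `f ↦ f ∘ φ`, maps the closed unit ball of `F*` onto the closed unit ball
of `E*` (i.e. `φ*` is a strict coisometry). -/
theorem stmt0 {E F : Type} [NormedAddCommGroup E] [NormedSpace ℂ E]
    [NormedAddCommGroup F] [NormedSpace ℂ F] (φ : E →L[ℂ] F) :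
    (∀ x : E, ‖φ x‖ = ‖x‖) ↔
      (fun f : F →L[ℂ] ℂ => f.comp φ) '' Metric.closedBall 0 1 =
        Metric.closedBall (0 : E →L[ℂ] ℂ) 1 := by
  constructor
  · intro h
    apply Set.Subset.antisymm
    · rintro _ ⟨f, hf, rfl⟩
      simp only [Metric.mem_closedBall, dist_zero_right] at hf ⊢
      refine ContinuousLinearMap.opNorm_le_bound _ zero_le_one fun x => ?_
      calc ‖f (φ x)‖ ≤ ‖f‖ * ‖φ x‖ := f.le_opNorm _
        _ ≤ 1 * ‖x‖ := by rw [h x]; exact mul_le_mul_of_nonneg_right hf (norm_nonneg _)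
        _ = 1 * ‖x‖ := rfl
    · intro g hg
      simp only [Metric.mem_closedBall, dist_zero_right] at hg
      set ψ : E →ₗᵢ[ℂ] F := ⟨φ.toLinearMap, h⟩ with hψ
      set e := ψ.equivRange
      -- functional on the range
      set g₀ : (LinearMap.range ψ.toLinearMap) →L[ℂ] ℂ :=
        g.comp (e.symm.toLinearIsometry.toContinuousLinearMap) with hg₀
      obtain ⟨f, hfe, hfn⟩ := exists_extension_norm_eq (LinearMap.range ψ.toLinearMap) g₀
      refine ⟨f, ?_, ?_⟩
      · simp only [Metric.mem_closedBall, dist_zero_right]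
        rw [hfn, hg₀, show ‖g.comp e.symm.toLinearIsometry.toContinuousLinearMap‖ = ‖g‖ from
          g.opNorm_comp_linearIsometryEquiv e.symm]
        exact hg
      · ext x
        have hx : φ x ∈ LinearMap.range ψ.toLinearMap := ⟨x, rfl⟩
        have := hfe ⟨φ x, hx⟩
        simp only [ContinuousLinearMap.comp_apply]
        rw [this, hg₀]
        simp only [ContinuousLinearMap.comp_apply]
        congr 1
        have hex : e x = ⟨φ x, hx⟩ := rfl
        rw [← hex]
        exact e.symm_apply_apply x
  · intro h x
    apply le_antisymm
    · obtain ⟨f, hf1, hf2⟩ := exists_dual_vector'' ℂ (φ x)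
      have hmem : f.comp φ ∈ Metric.closedBall (0 : E →L[ℂ] ℂ) 1 := by
        rw [← h]; exact ⟨f, by simpa using hf1, rfl⟩
      simp only [Metric.mem_closedBall, dist_zero_right] at hmem
      calc ‖φ x‖ = ‖f (φ x)‖ := by rw [hf2]; simp
        _ = ‖(f.comp φ) x‖ := rfl
        _ ≤ ‖f.comp φ‖ * ‖x‖ := (f.comp φ).le_opNorm x
        _ ≤ 1 * ‖x‖ := mul_le_mul_of_nonneg_right hmem (norm_nonneg _)
        _ = ‖x‖ := one_mul _
    · obtain ⟨g, hg1, hg2⟩ := exists_dual_vector'' ℂ x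
      have hmem : g ∈ Metric.closedBall (0 : E →L[ℂ] ℂ) 1 := by
        simpa using hg1
      rw [← h] at hmem
      obtain ⟨f, hf, hfg⟩ := hmem
      simp only [Metric.mem_closedBall, dist_zero_right] at hf
      calc ‖x‖ = ‖g x‖ := by rw [hg2]; simp
        _ = ‖f (φ x)‖ := by rw [← hfg]; rfl
        _ ≤ ‖f‖ * ‖φ x‖ := f.le_opNorm _
        _ ≤ 1 * ‖φ x‖ := mul_le_mul_of_nonneg_right hf (norm_nonneg _)
        _ = ‖φ x‖ := one_mul _
end

section
/- An operator φ : E → F between normed spaces is an isometry if and only if its adjoint φ* : F* → E* maps the open unit ball of F* onto the open unit ball of E*. -/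
set_option maxHeartbeats 1000000
set_option synthInstance.maxHeartbeats 400000

/-- An operator `φ : E → F` between normed spaces is an isometry if and only if its adjoint
`φ* : F* → E*`, `f ↦ f ∘ φ`, maps the open unit ball of `F*` onto the open unit ball
of `E*` (i.e. `φ*` is a coisometry). -/
theorem stmt1 {E F : Type} [NormedAddCommGroup E] [NormedSpace ℂ E]
    [NormedAddCommGroup F] [NormedSpace ℂ F] (φ : E →L[ℂ] F) :
    (∀ x : E, ‖φ x‖ = ‖x‖) ↔
      (fun f : F →L[ℂ] ℂ => f.comp φ) '' Metric.ball 0 1 =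
        Metric.ball (0 : E →L[ℂ] ℂ) 1 := by
  constructor
  · intro hiso
    -- φ as a linear isometry
    set li : E →ₗᵢ[ℂ] F := ⟨φ.toLinearMap, hiso⟩ with hli
    have hφnorm : ‖φ‖ ≤ 1 := φ.opNorm_le_bound zero_le_one (fun x => by
      rw [hiso x, one_mul])
    ext g
    simp only [Set.mem_image, Metric.mem_ball, dist_zero_right]
    constructor
    · rintro ⟨f, hf, rfl⟩
      calc ‖f.comp φ‖ ≤ ‖f‖ * ‖φ‖ := f.opNorm_comp_le φ
        _ ≤ ‖f‖ * 1 := by gcongr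
        _ < 1 := by simpa using hf
    · intro hg
      -- extend g ∘ (equivRange li).symm from range to F
      set e : E ≃ₗᵢ[ℂ] (LinearMap.range li.toLinearMap) := li.equivRange
      set f₀ : (LinearMap.range li.toLinearMap) →L[ℂ] ℂ :=
        g.comp e.symm.toLinearIsometry.toContinuousLinearMap
      have hf₀ : ‖f₀‖ = ‖g‖ := g.opNorm_comp_linearIsometryEquiv e.symm
      obtain ⟨f, hext, hnorm⟩ := exists_extension_norm_eq (LinearMap.range li.toLinearMap) f₀
      refine ⟨f, ?_, ?_⟩
      · rw [hnorm, hf₀]; exact hg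
      · ext x
        have hmem : φ x ∈ LinearMap.range li.toLinearMap := ⟨x, rfl⟩
        have := hext ⟨φ x, hmem⟩
        simp only [ContinuousLinearMap.comp_apply]
        rw [this]
        have hex : e x = ⟨φ x, hmem⟩ := by
          apply Subtype.ext
          rfl
        simp only [f₀, ContinuousLinearMap.comp_apply]
        rw [← hex]
        simp
  · intro h
    have hsub : ∀ f : F →L[ℂ] ℂ, ‖f‖ < 1 → ‖f.comp φ‖ < 1 := by
      intro f hf
      have : f.comp φ ∈ (fun f : F →L[ℂ] ℂ => f.comp φ) '' Metric.ball 0 1 :=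
        ⟨f, by simpa [Metric.mem_ball] using hf, rfl⟩
      rw [h] at this
      simpa [Metric.mem_ball] using this
    intro x
    refine le_antisymm ?_ ?_
    · -- ‖φ x‖ ≤ ‖x‖
      by_contra hlt
      push_neg at hlt
      have hφx : φ x ≠ 0 := by
        intro h0; rw [h0, norm_zero] at hlt; exact absurd (norm_nonneg x) (not_le.mpr hlt)
      obtain ⟨f, hf1, hfx⟩ := exists_dual_vector ℂ (φ x) (norm_ne_zero_iff.mpr hφx)
      have hpos : (0:ℝ) < ‖φ x‖ := norm_pos_iff.mpr hφx
      obtain ⟨r, hr1, hr2⟩ := exists_between ((div_lt_one hpos).mpr hlt)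
      -- r ∈ (‖x‖/‖φx‖, 1)
      have hr0 : 0 ≤ r := le_trans (div_nonneg (norm_nonneg x) (norm_nonneg _)) hr1.le
      have hfr : ‖(r : ℂ) • f‖ < 1 := by
        refine lt_of_le_of_lt (ContinuousLinearMap.opNorm_smul_le _ _) ?_
        rw [hf1, mul_one, Complex.norm_real]
        simpa [abs_of_nonneg hr0] using hr2
      have := hsub ((r : ℂ) • f) hfr
      have hb : ‖(((r : ℂ) • f).comp φ) x‖ ≤ ‖((r : ℂ) • f).comp φ‖ * ‖x‖ :=
        ContinuousLinearMap.le_opNorm _ x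
      have hval : ‖(((r : ℂ) • f).comp φ) x‖ = r * ‖φ x‖ := by
        simp only [ContinuousLinearMap.comp_apply, ContinuousLinearMap.smul_apply, hfx]
        rw [norm_smul]
        simp [abs_of_nonneg hr0]
      rw [hval] at hb
      have : r * ‖φ x‖ ≤ 1 * ‖x‖ := le_trans hb (by
        apply mul_le_mul_of_nonneg_right (le_of_lt this) (norm_nonneg x))
      rw [one_mul] at this
      have : ‖x‖ / ‖φ x‖ * ‖φ x‖ < r * ‖φ x‖ :=
        mul_lt_mul_of_pos_right hr1 hpos
      rw [div_mul_cancel₀ _ (norm_ne_zero_iff.mpr hφx)] at this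
      linarith
    · -- ‖x‖ ≤ ‖φ x‖
      by_contra hlt
      push_neg at hlt
      have hx : x ≠ 0 := by
        intro h0; rw [h0, norm_zero] at hlt; exact absurd (norm_nonneg _) (not_le.mpr hlt)
      obtain ⟨g, hg1, hgx⟩ := exists_dual_vector ℂ x (norm_ne_zero_iff.mpr hx)
      obtain ⟨r, hr1, hr2⟩ := exists_between ((div_lt_one (norm_pos_iff.mpr hx)).mpr hlt)
      have hr0 : 0 ≤ r := le_trans (div_nonneg (norm_nonneg _) (norm_nonneg _)) hr1.le
      have hgr : (r : ℂ) • g ∈ Metric.ball (0 : E →L[ℂ] ℂ) 1 := by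
        rw [Metric.mem_ball, dist_zero_right]
        refine lt_of_le_of_lt (ContinuousLinearMap.opNorm_smul_le _ _) ?_
        rw [hg1, mul_one, Complex.norm_real]
        simpa [abs_of_nonneg hr0] using hr2
      rw [← h] at hgr
      obtain ⟨f, hf, hfeq⟩ := hgr
      have hfn : ‖f‖ < 1 := by simpa [Metric.mem_ball] using hf
      have hval : ‖((r : ℂ) • g) x‖ = r * ‖x‖ := by
        simp only [ContinuousLinearMap.smul_apply, hgx, norm_smul]
        simp [abs_of_nonneg hr0]
      have : ‖((r : ℂ) • g) x‖ = ‖f (φ x)‖ := by rw [← hfeq]; rfl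
      have hb : ‖f (φ x)‖ ≤ ‖f‖ * ‖φ x‖ := f.le_opNorm _
      have hb2 : ‖f‖ * ‖φ x‖ ≤ 1 * ‖φ x‖ :=
        mul_le_mul_of_nonneg_right hfn.le (norm_nonneg _)
      have hr3 : ‖φ x‖ / ‖x‖ * ‖x‖ < r * ‖x‖ :=
        mul_lt_mul_of_pos_right hr1 (norm_pos_iff.mpr hx)
      rw [div_mul_cancel₀ _ (norm_ne_zero_iff.mpr hx)] at hr3
      rw [hval] at this
      linarith [this, hb, hb2]
end

section
/- If a normed space P has the property that every bounded operator from P into any normed space X lifts, with the same norm, across any bounded operator τ : Y → X that maps the closed unit ball of Y onto the closed unit ball of X, then the completion of P has the analogous property for Banach spaces. -/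
open UniformSpace ContinuousLinearMap

/-- If a normed space `P` is metrically projective (every bounded operator from `P` lifts
with the same norm across any strictly coisometric operator, i.e. one mapping the closed
unit ball onto the closed unit ball, between normed spaces), then the completion of `P`
is metrically projective with respect to Banach spaces. -/
theorem stmt8 {P : Type} [NormedAddCommGroup P] [NormedSpace ℂ P]
    (hP : ∀ (X Y : Type) [NormedAddCommGroup X] [NormedSpace ℂ X]
        [NormedAddCommGroup Y] [NormedSpace ℂ Y] (τ : Y →L[ℂ] X),
      τ '' Metric.closedBall 0 1 = Metric.closedBall (0 : X) 1 →
      ∀ φ : P →L[ℂ] X, ∃ ψ : P →L[ℂ] Y, τ.comp ψ = φ ∧ ‖ψ‖ = ‖φ‖) :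
    ∀ (X Y : Type) [NormedAddCommGroup X] [NormedSpace ℂ X] [CompleteSpace X]
        [NormedAddCommGroup Y] [NormedSpace ℂ Y] [CompleteSpace Y] (τ : Y →L[ℂ] X),
      τ '' Metric.closedBall 0 1 = Metric.closedBall (0 : X) 1 →
      ∀ φ : UniformSpace.Completion P →L[ℂ] X,
        ∃ ψ : UniformSpace.Completion P →L[ℂ] Y, τ.comp ψ = φ ∧ ‖ψ‖ = ‖φ‖ := by
  intro X Y _ _ _ _ _ _ τ hτ φ
  -- τ has norm ≤ 1
  have hτ1 : ‖τ‖ ≤ 1 := by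
    refine opNorm_le_bound τ zero_le_one fun y => ?_
    rcases eq_or_ne y 0 with rfl | hy
    · simp
    · have hy' : ‖y‖ ≠ 0 := norm_ne_zero_iff.mpr hy
      have hmem : (‖y‖⁻¹ : ℂ) • y ∈ Metric.closedBall (0 : Y) 1 := by
        simp [norm_smul, inv_mul_cancel₀ hy']
      have : τ ((‖y‖⁻¹ : ℂ) • y) ∈ Metric.closedBall (0 : X) 1 := by
        rw [← hτ]; exact Set.mem_image_of_mem _ hmem
      rw [Metric.mem_closedBall, dist_zero_right, map_smul, norm_smul] at this
      simp only [Complex.norm_real, norm_inv, Complex.norm_ofNat] at this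
      calc ‖τ y‖ = ‖y‖ * (‖y‖⁻¹ * ‖τ y‖) := by field_simp
        _ ≤ ‖y‖ * 1 := by
            refine mul_le_mul_of_nonneg_left ?_ (norm_nonneg _)
            simpa [norm_smul, hy'] using this
        _ = 1 * ‖y‖ := by ring
  -- the canonical embedding
  set e : P →L[ℂ] Completion P := Completion.toComplL
  have he_isom : Isometry ((↑) : P → Completion P) := Completion.coe_isometry
  have h_dense : DenseRange e := by
    simpa [e, Completion.coe_toComplL] using Completion.denseRange_coe (α := P)
  have h_bound : ∀ x : P, ‖x‖ ≤ (1 : NNReal) * ‖e x‖ := fun x => by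
    simp [e, Completion.norm_coe]
  have h_ui : IsUniformInducing e := by
    simpa [e, Completion.coe_toComplL] using he_isom.isUniformInducing
  -- restrict φ to P
  obtain ⟨ψ₀, hψ₀c, hψ₀n⟩ := hP X Y τ hτ (φ.comp e)
  -- extend ψ₀ to the completion
  set ψ : Completion P →L[ℂ] Y := ψ₀.extend e with hψ
  have hcomp : τ.comp ψ = φ := by
    apply ContinuousLinearMap.coeFn_injective
    refine h_dense.equalizer (τ.comp ψ).continuous φ.continuous (funext fun x => ?_)
    have := ContinuousLinearMap.ext_iff.mp hψ₀c x
    simp only [Function.comp_apply, ContinuousLinearMap.comp_apply, hψ, extend_eq (h_dense := h_dense) (h_e := h_ui)]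
    simpa using this
  have hle1 : ‖ψ‖ ≤ ‖φ‖ := by
    have h1 : ‖ψ‖ ≤ (1 : NNReal) * ‖ψ₀‖ := opNorm_extend_le ψ₀ h_dense h_bound
    have h2 : ‖φ.comp e‖ ≤ ‖φ‖ := by
      refine opNorm_le_bound _ (norm_nonneg φ) fun x => ?_
      calc ‖(φ.comp e) x‖ ≤ ‖φ‖ * ‖e x‖ := φ.le_opNorm (e x)
        _ = ‖φ‖ * ‖x‖ := by rw [show ‖e x‖ = ‖x‖ from by simp [e, Completion.norm_coe]]
    calc ‖ψ‖ ≤ (1 : NNReal) * ‖ψ₀‖ := h1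
      _ = ‖ψ₀‖ := by simp
      _ = ‖φ.comp e‖ := hψ₀n
      _ ≤ ‖φ‖ := h2
  have hle2 : ‖φ‖ ≤ ‖ψ‖ := by
    calc ‖φ‖ = ‖τ.comp ψ‖ := by rw [hcomp]
      _ ≤ ‖τ‖ * ‖ψ‖ := opNorm_comp_le τ ψ
      _ ≤ 1 * ‖ψ‖ := mul_le_mul_of_nonneg_right hτ1 (norm_nonneg _)
      _ = ‖ψ‖ := one_mul _
  exact ⟨ψ, hcomp, le_antisymm hle1 hle2⟩
end

section
/- Every metrically projective normed space or extremely projective Banach space E is metrically flat: for every isometry i : F → G of Banach spaces, the operator 1_E ⊗ i : E ⊗̂ F → E ⊗̂ G between projective tensor products is an isometry. -/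
open scoped TensorProduct

/-- The projective tensor norm of an element of the algebraic tensor product `E ⊗ F`:
the infimum of `Σ ‖x_i‖ ‖y_i‖` over all finite representations `u = Σ x_i ⊗ y_i`.
The completed projective tensor product `E ⊗̂ F` is the completion of `E ⊗ F` in this
norm, so a map between completed projective tensor products is an isometry iff it
preserves this norm on the algebraic tensor products. -/
noncomputable def projNorm {E F : Type} [NormedAddCommGroup E] [NormedSpace ℂ E]
    [NormedAddCommGroup F] [NormedSpace ℂ F] (u : E ⊗[ℂ] F) : ℝ :=
  sInf {r : ℝ | ∃ L : List (E × F),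
    u = (L.map fun p => p.1 ⊗ₜ[ℂ] p.2).sum ∧ r = (L.map fun p => ‖p.1‖ * ‖p.2‖).sum}

namespace Stmt12Aux

variable {E F G : Type} [NormedAddCommGroup E] [NormedSpace ℂ E]
  [NormedAddCommGroup F] [NormedSpace ℂ F]
  [NormedAddCommGroup G] [NormedSpace ℂ G]

/-- The set of norm-sums of representations of `u`. -/
def reps (u : E ⊗[ℂ] F) : Set ℝ :=
  {r : ℝ | ∃ L : List (E × F),
    u = (L.map fun p => p.1 ⊗ₜ[ℂ] p.2).sum ∧ r = (L.map fun p => ‖p.1‖ * ‖p.2‖).sum}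

lemma sum_map_congr {α M : Type*} [AddCommMonoid M] (l : List α) {f g : α → M}
    (h : ∀ a ∈ l, f a = g a) : (l.map f).sum = (l.map g).sum := by
  rw [List.map_congr_left h]

lemma projNorm_def (u : E ⊗[ℂ] F) : projNorm u = sInf (reps u) := rfl

lemma nonneg_of_mem_reps {u : E ⊗[ℂ] F} {r : ℝ} (h : r ∈ reps u) : 0 ≤ r := by
  obtain ⟨L, -, rfl⟩ := h
  refine List.sum_nonneg ?_
  intro x hx
  obtain ⟨p, -, rfl⟩ := List.mem_map.1 hx
  positivity

lemma exists_rep (u : E ⊗[ℂ] F) :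
    ∃ L : List (E × F), u = (L.map fun p => p.1 ⊗ₜ[ℂ] p.2).sum := by
  induction u using TensorProduct.induction_on with
  | zero => exact ⟨[], by simp⟩
  | tmul x y => exact ⟨[(x, y)], by simp⟩
  | add u v hu hv =>
      obtain ⟨L, hL⟩ := hu
      obtain ⟨M, hM⟩ := hv
      exact ⟨L ++ M, by simp [hL, hM]⟩

lemma reps_nonempty (u : E ⊗[ℂ] F) : (reps u).Nonempty := by
  obtain ⟨L, hL⟩ := exists_rep u
  exact ⟨_, L, hL, rfl⟩

lemma reps_bddBelow (u : E ⊗[ℂ] F) : BddBelow (reps u) :=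
  ⟨0, fun _ hr => nonneg_of_mem_reps hr⟩

lemma projNorm_nonneg (u : E ⊗[ℂ] F) : 0 ≤ projNorm u :=
  le_csInf (reps_nonempty u) fun _ hr => nonneg_of_mem_reps hr

lemma projNorm_le_of_mem {u : E ⊗[ℂ] F} {r : ℝ} (h : r ∈ reps u) : projNorm u ≤ r :=
  csInf_le (reps_bddBelow u) h

lemma projNorm_tmul_le (x : E) (y : F) : projNorm (x ⊗ₜ[ℂ] y) ≤ ‖x‖ * ‖y‖ :=
  projNorm_le_of_mem ⟨[(x, y)], by simp, by simp⟩

lemma exists_rep_lt (u : E ⊗[ℂ] F) {ε : ℝ} (hε : 0 < ε) :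
    ∃ L : List (E × F), u = (L.map fun p => p.1 ⊗ₜ[ℂ] p.2).sum ∧
      (L.map fun p => ‖p.1‖ * ‖p.2‖).sum < projNorm u + ε := by
  obtain ⟨r, hr, hlt⟩ := Real.lt_sInf_add_pos (reps_nonempty u) hε
  obtain ⟨L, hL, rfl⟩ := hr
  exact ⟨L, hL, hlt⟩

lemma projNorm_add_le (u v : E ⊗[ℂ] F) : projNorm (u + v) ≤ projNorm u + projNorm v := by
  refine le_of_forall_pos_le_add fun ε hε => ?_
  obtain ⟨L, hL, hLs⟩ := exists_rep_lt u (half_pos hε)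
  obtain ⟨M, hM, hMs⟩ := exists_rep_lt v (half_pos hε)
  have hmem : (L.map fun p => ‖p.1‖ * ‖p.2‖).sum + (M.map fun p => ‖p.1‖ * ‖p.2‖).sum
      ∈ reps (u + v) := ⟨L ++ M, by simp [hL, hM], by simp⟩
  have := projNorm_le_of_mem hmem
  linarith

lemma projNorm_zero : projNorm (0 : E ⊗[ℂ] F) = 0 :=
  le_antisymm (projNorm_le_of_mem ⟨[], by simp, by simp⟩) (projNorm_nonneg 0)

lemma projNorm_smul_le (c : ℂ) (u : E ⊗[ℂ] F) : projNorm (c • u) ≤ ‖c‖ * projNorm u := by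
  refine le_of_forall_pos_le_add fun ε hε => ?_
  have hc1 : (0 : ℝ) < ‖c‖ + 1 := by positivity
  have hε' : 0 < ε / (‖c‖ + 1) := by positivity
  obtain ⟨L, hL, hLs⟩ := exists_rep_lt u hε'
  have hmem : ‖c‖ * (L.map fun p => ‖p.1‖ * ‖p.2‖).sum ∈ reps (c • u) := by
    refine ⟨L.map fun p => (c • p.1, p.2), ?_, ?_⟩
    · rw [hL, List.smul_sum, List.map_map, List.map_map]
      exact congrArg List.sum (List.map_congr_left fun p _ => by
        simp [Function.comp, TensorProduct.smul_tmul'])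
    · rw [← List.sum_map_mul_left, List.map_map]
      exact sum_map_congr L fun p _ => by simp [Function.comp, norm_smul, mul_assoc]
  have h1 := projNorm_le_of_mem hmem
  have h2 : ‖c‖ * (L.map fun p => ‖p.1‖ * ‖p.2‖).sum
      ≤ ‖c‖ * (projNorm u + ε / (‖c‖ + 1)) :=
    mul_le_mul_of_nonneg_left hLs.le (norm_nonneg c)
  have h3 : ‖c‖ * (ε / (‖c‖ + 1)) ≤ ε := by
    have h4 : ε / (‖c‖ + 1) * (‖c‖ + 1) = ε := div_mul_cancel₀ _ (ne_of_gt hc1)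
    nlinarith [hε'.le, norm_nonneg c]
  nlinarith [norm_nonneg c]

lemma projNorm_smul (c : ℂ) (u : E ⊗[ℂ] F) : projNorm (c • u) = ‖c‖ * projNorm u := by
  rcases eq_or_ne c 0 with rfl | hc
  · simp [projNorm_zero]
  · refine le_antisymm (projNorm_smul_le c u) ?_
    have h := projNorm_smul_le c⁻¹ (c • u)
    rw [smul_smul, inv_mul_cancel₀ hc, one_smul, norm_inv] at h
    have hc' : 0 < ‖c‖ := norm_pos_iff.2 hc
    calc ‖c‖ * projNorm u ≤ ‖c‖ * (‖c‖⁻¹ * projNorm (c • u)) :=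
          mul_le_mul_of_nonneg_left h (norm_nonneg c)
      _ = projNorm (c • u) := by
            rw [← mul_assoc, mul_inv_cancel₀ (ne_of_gt hc'), one_mul]

variable (E F) in
/-- The projective tensor norm as a seminorm. -/
noncomputable def projSeminorm : Seminorm ℂ (E ⊗[ℂ] F) :=
  Seminorm.of projNorm projNorm_add_le projNorm_smul

/-- Hahn–Banach: a functional norming `u` for the projective seminorm. -/
lemma exists_norming (u : E ⊗[ℂ] F) :
    ∃ g : E ⊗[ℂ] F →ₗ[ℂ] ℂ, (∀ v, ‖g v‖ ≤ projNorm v) ∧ g u = (projNorm u : ℂ) := by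
  letI : SeminormedAddCommGroup (E ⊗[ℂ] F) :=
    AddGroupSeminorm.toSeminormedAddCommGroup (projSeminorm E F).toAddGroupSeminorm
  have hnorm : ∀ v : E ⊗[ℂ] F, ‖v‖ = projNorm v := fun _ => rfl
  letI : NormedSpace ℂ (E ⊗[ℂ] F) :=
    ⟨fun c v => le_of_eq (by rw [hnorm, hnorm, projNorm_smul])⟩
  obtain ⟨g, hg1, hg2⟩ := exists_dual_vector'' ℂ (SeparationQuotient.mk u)
  refine ⟨g.toLinearMap.comp (SeparationQuotient.mkCLM ℂ (E ⊗[ℂ] F)).toLinearMap, ?_, ?_⟩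
  · intro v
    have h1 : ‖g (SeparationQuotient.mk v)‖ ≤ ‖g‖ * ‖SeparationQuotient.mk v‖ :=
      g.le_opNorm _
    have h2 : ‖SeparationQuotient.mk v‖ = projNorm v := hnorm v
    have h3 : ‖g‖ * ‖SeparationQuotient.mk v‖ ≤ 1 * projNorm v := by
      rw [h2]
      exact mul_le_mul_of_nonneg_right hg1 (projNorm_nonneg v)
    simpa using h1.trans h3
  · have h2 : ‖SeparationQuotient.mk u‖ = projNorm u := hnorm u
    simpa [h2] using hg2

/-- The functional on `E ⊗ F` induced by a continuous bilinear functional. -/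
noncomputable def pairing (ψ : E →L[ℂ] F →L[ℂ] ℂ) : E ⊗[ℂ] F →ₗ[ℂ] ℂ :=
  TensorProduct.lift (LinearMap.mk₂ ℂ (fun x y => ψ x y)
    (fun x x' y => by simp) (fun c x y => by simp)
    (fun x y y' => by simp) (fun c x y => by simp))

@[simp] lemma pairing_tmul (ψ : E →L[ℂ] F →L[ℂ] ℂ) (x : E) (y : F) :
    pairing ψ (x ⊗ₜ[ℂ] y) = ψ x y := rfl

lemma map_list_tmul (g : E ⊗[ℂ] F →ₗ[ℂ] ℂ) (L : List (E × F)) :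
    g ((L.map fun p => p.1 ⊗ₜ[ℂ] p.2).sum) = (L.map fun p => g (p.1 ⊗ₜ[ℂ] p.2)).sum := by
  rw [map_list_sum, List.map_map]
  rfl

lemma norm_pairing_list_le (ψ : E →L[ℂ] F →L[ℂ] ℂ) (L : List (E × F)) :
    ‖(L.map fun p => ψ p.1 p.2).sum‖ ≤ ‖ψ‖ * (L.map fun p => ‖p.1‖ * ‖p.2‖).sum := by
  induction L with
  | nil => simp
  | cons a L ih =>
      simp only [List.map_cons, List.sum_cons]
      calc ‖ψ a.1 a.2 + (L.map fun p => ψ p.1 p.2).sum‖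
          ≤ ‖ψ a.1 a.2‖ + ‖(L.map fun p => ψ p.1 p.2).sum‖ := norm_add_le _ _
        _ ≤ ‖ψ‖ * ‖a.1‖ * ‖a.2‖ + ‖ψ‖ * (L.map fun p => ‖p.1‖ * ‖p.2‖).sum :=
            add_le_add (ψ.le_opNorm₂ a.1 a.2) ih
        _ = ‖ψ‖ * (‖a.1‖ * ‖a.2‖ + (L.map fun p => ‖p.1‖ * ‖p.2‖).sum) := by ring

/-- Hahn–Banach extension of a functional along a linear isometry. -/
lemma exists_comp_eq (i : F →ₗᵢ[ℂ] G) (f : F →L[ℂ] ℂ) :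
    ∃ h : G →L[ℂ] ℂ, h.comp i.toContinuousLinearMap = f ∧ ‖h‖ ≤ ‖f‖ := by
  set e := i.equivRange with he_def
  set f' : (LinearMap.range i.toLinearMap) →L[ℂ] ℂ :=
    f.comp (e.symm.toContinuousLinearEquiv : (LinearMap.range i.toLinearMap) →L[ℂ] F) with hf'_def
  have hf'app : ∀ z, f' z = f (e.symm z) := fun z => rfl
  have hf' : ‖f'‖ ≤ ‖f‖ := by
    refine ContinuousLinearMap.opNorm_le_bound _ (norm_nonneg f) fun z => ?_
    calc ‖f' z‖ = ‖f (e.symm z)‖ := rfl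
      _ ≤ ‖f‖ * ‖e.symm z‖ := f.le_opNorm _
      _ = ‖f‖ * ‖z‖ := by rw [e.symm.norm_map]
  obtain ⟨h, hh1, hh2⟩ := exists_extension_norm_eq (LinearMap.range i.toLinearMap) f'
  refine ⟨h, ?_, hh2.le.trans hf'⟩
  ext x
  have hx : i x ∈ LinearMap.range i.toLinearMap := ⟨x, rfl⟩
  have hex : e x = ⟨i x, hx⟩ := Subtype.ext rfl
  have hsymm : e.symm ⟨i x, hx⟩ = x := by rw [← hex, e.symm_apply_apply]
  have := hh1 ⟨i x, hx⟩
  simp only [hf'app, hsymm] at this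
  simpa using this

end Stmt12Aux

open Stmt12Aux in
set_option maxHeartbeats 1000000 in
/-- Every metrically projective or extremely projective Banach space `E` is metrically
flat: for every isometry `i : F → G` of Banach spaces, the induced operator
`1_E ⊗ i : E ⊗̂ F → E ⊗̂ G` between projective tensor products is an isometry, i.e.
it preserves the projective tensor norm. -/
theorem stmt12 (E : Type) [NormedAddCommGroup E] [NormedSpace ℂ E] [CompleteSpace E]
    (hproj :
      (∀ (X Y : Type) [NormedAddCommGroup X] [NormedSpace ℂ X] [CompleteSpace X]
          [NormedAddCommGroup Y] [NormedSpace ℂ Y] [CompleteSpace Y] (τ : Y →L[ℂ] X),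
        τ '' Metric.closedBall 0 1 = Metric.closedBall (0 : X) 1 →
        ∀ φ : E →L[ℂ] X, ∃ ψ : E →L[ℂ] Y, τ.comp ψ = φ ∧ ‖ψ‖ = ‖φ‖) ∨
      (∀ (X Y : Type) [NormedAddCommGroup X] [NormedSpace ℂ X] [CompleteSpace X]
          [NormedAddCommGroup Y] [NormedSpace ℂ Y] [CompleteSpace Y] (τ : Y →L[ℂ] X),
        τ '' Metric.ball 0 1 = Metric.ball (0 : X) 1 →
        ∀ φ : E →L[ℂ] X, ∀ ε > (0 : ℝ),
          ∃ ψ : E →L[ℂ] Y, τ.comp ψ = φ ∧ ‖ψ‖ < ‖φ‖ + ε)) :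
    ∀ (F G : Type) [NormedAddCommGroup F] [NormedSpace ℂ F] [CompleteSpace F]
      [NormedAddCommGroup G] [NormedSpace ℂ G] [CompleteSpace G]
      (i : F →ₗᵢ[ℂ] G) (u : E ⊗[ℂ] F),
      projNorm (TensorProduct.map LinearMap.id i.toLinearMap u) = projNorm u := by
  intro F G _ _ _ _ _ _ i u
  -- notation
  set T : E ⊗[ℂ] F →ₗ[ℂ] E ⊗[ℂ] G := TensorProduct.map LinearMap.id i.toLinearMap with hT
  refine le_antisymm ?_ ?_
  · -- easy direction: every representation of `u` gives a representation of `T u`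
    refine csInf_le_csInf (reps_bddBelow _) (reps_nonempty u) ?_
    rintro r ⟨L, hL, hr⟩
    refine ⟨L.map fun p => (p.1, i p.2), ?_, ?_⟩
    · rw [hL, map_list_sum, List.map_map, List.map_map]
      exact congrArg List.sum (List.map_congr_left fun p _ => by simp [hT, Function.comp])
    · rw [hr, List.map_map]
      exact sum_map_congr L fun p _ => by simp [Function.comp, i.norm_map]
  · -- hard direction
    refine le_csInf (reps_nonempty _) ?_
    rintro r ⟨M, hM, hrM⟩
    have hr0 : 0 ≤ r := nonneg_of_mem_reps ⟨M, hM, hrM⟩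
    obtain ⟨g, hgle, hgu⟩ := exists_norming u
    -- the bilinear functional associated with g
    have hbound : ∀ (x : E) (y : F), ‖((TensorProduct.mk ℂ E F).compr₂ g) x y‖ ≤ 1 * ‖x‖ * ‖y‖ := by
      intro x y
      simpa using (hgle (x ⊗ₜ[ℂ] y)).trans (projNorm_tmul_le x y)
    set φ : E →L[ℂ] F →L[ℂ] ℂ :=
      LinearMap.mkContinuous₂ ((TensorProduct.mk ℂ E F).compr₂ g) 1 hbound with hφdef
    have hφnorm : ‖φ‖ ≤ 1 := LinearMap.mkContinuous₂_norm_le _ zero_le_one _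
    have hφ : ∀ (x : E) (y : F), φ x y = g (x ⊗ₜ[ℂ] y) := fun x y => rfl
    -- the coisometry τ = i* : G* → F*
    set iC := i.toContinuousLinearMap with hiC
    set τ : (G →L[ℂ] ℂ) →L[ℂ] (F →L[ℂ] ℂ) := (ContinuousLinearMap.compL ℂ F G ℂ).flip iC
      with hτdef
    have hτ : ∀ h : G →L[ℂ] ℂ, τ h = h.comp iC := fun h => rfl
    have hτle : ∀ h : G →L[ℂ] ℂ, ‖τ h‖ ≤ ‖h‖ := by
      intro h
      rw [hτ]
      refine ContinuousLinearMap.opNorm_le_bound _ (norm_nonneg h) fun x => ?_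
      calc ‖h (iC x)‖ ≤ ‖h‖ * ‖iC x‖ := h.le_opNorm _
        _ = ‖h‖ * ‖x‖ := by rw [hiC]; rw [i.coe_toContinuousLinearMap]; rw [i.norm_map]
    have hτsur : ∀ f : F →L[ℂ] ℂ, ∃ h : G →L[ℂ] ℂ, τ h = f ∧ ‖h‖ ≤ ‖f‖ := by
      intro f
      obtain ⟨h, hh, hn⟩ := exists_comp_eq i f
      exact ⟨h, by rw [hτ]; exact hh, hn⟩
    -- key computation: any lift ψ of φ computes g u on the representation M
    have hcomp : ∀ ψ : E →L[ℂ] G →L[ℂ] ℂ, τ.comp ψ = φ →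
        g u = (M.map fun p => ψ p.1 p.2).sum := by
      intro ψ hψ
      have hmaps : (pairing ψ).comp T = g := by
        apply TensorProduct.ext'
        intro x y
        have hx : τ (ψ x) = φ x := by
          rw [← hψ]; rfl
        have hxy : ψ x (i y) = φ x y := by
          rw [← hx, hτ]; rfl
        simp only [LinearMap.comp_apply, hT, TensorProduct.map_tmul, LinearMap.id_coe, id_eq,
          pairing_tmul, LinearIsometry.coe_toLinearMap]
        rw [hxy, hφ]
      have h1 : g u = pairing ψ (T u) := by
        rw [← hmaps]; rfl
      rw [h1, hM, map_list_tmul]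
      exact sum_map_congr M fun p _ => rfl
    -- bound ‖Σ ψ xᵢ zᵢ‖ by ‖ψ‖ * r
    have hbnd : ∀ ψ : E →L[ℂ] G →L[ℂ] ℂ, τ.comp ψ = φ → projNorm u ≤ ‖ψ‖ * r := by
      intro ψ hψ
      have h1 : (projNorm u : ℂ) = (M.map fun p => ψ p.1 p.2).sum := by
        rw [← hgu]; exact hcomp ψ hψ
      have h2 : projNorm u = ‖((projNorm u : ℝ) : ℂ)‖ := by
        rw [Complex.norm_real, Real.norm_of_nonneg (projNorm_nonneg u)]
      rw [h2, h1, hrM]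
      exact norm_pairing_list_le ψ M
    rcases hproj with h1 | h2
    · -- metrically projective case
      have hclosed : τ '' Metric.closedBall 0 1 = Metric.closedBall (0 : F →L[ℂ] ℂ) 1 := by
        ext f
        simp only [Set.mem_image, Metric.mem_closedBall, dist_zero_right]
        constructor
        · rintro ⟨h, hh, rfl⟩
          exact (hτle h).trans hh
        · intro hf
          obtain ⟨h, hh, hn⟩ := hτsur f
          exact ⟨h, hn.trans hf, hh⟩
      obtain ⟨ψ, hψτ, hψn⟩ := h1 (F →L[ℂ] ℂ) (G →L[ℂ] ℂ) τ hclosed φ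
      calc projNorm u ≤ ‖ψ‖ * r := hbnd ψ hψτ
        _ ≤ 1 * r := mul_le_mul_of_nonneg_right (hψn.le.trans hφnorm) hr0
        _ = r := one_mul r
    · -- extremely projective case
      have hball : τ '' Metric.ball 0 1 = Metric.ball (0 : F →L[ℂ] ℂ) 1 := by
        ext f
        simp only [Set.mem_image, Metric.mem_ball, dist_zero_right]
        constructor
        · rintro ⟨h, hh, rfl⟩
          exact lt_of_le_of_lt (hτle h) hh
        · intro hf
          obtain ⟨h, hh, hn⟩ := hτsur f
          exact ⟨h, lt_of_le_of_lt hn hf, hh⟩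
      refine le_of_forall_pos_le_add fun ε hε => ?_
      have hr1 : (0 : ℝ) < r + 1 := by positivity
      have hε' : 0 < ε / (r + 1) := by positivity
      obtain ⟨ψ, hψτ, hψn⟩ := h2 (F →L[ℂ] ℂ) (G →L[ℂ] ℂ) τ hball φ (ε / (r + 1)) hε'
      have hψ1 : ‖ψ‖ ≤ 1 + ε / (r + 1) := by
        have := hψn.le
        linarith [hφnorm]
      calc projNorm u ≤ ‖ψ‖ * r := hbnd ψ hψτ
        _ ≤ (1 + ε / (r + 1)) * r := mul_le_mul_of_nonneg_right hψ1 hr0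
        _ = r + ε / (r + 1) * r := by ring
        _ ≤ r + ε := by
            have h4 : ε / (r + 1) * (r + 1) = ε := div_mul_cancel₀ _ (ne_of_gt hr1)
            nlinarith [hε'.le, hr0]
end

section
/- Every metrically projective normed space is isometrically isomorphic to l₁⁰(M) for some set M. -/
open scoped ENNReal

/-- The subspace `l₁⁰(M)` of `l₁(M) = lp (fun _ : M => ℂ) 1` consisting of finitely
supported functions. -/
noncomputable def l10 (M : Type) : Submodule ℂ (lp (fun _ : M => ℂ) 1) where
  carrier := {f | (Function.support (f : M → ℂ)).Finite}
  add_mem' := by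
    intro f g hf hg
    refine (hf.union hg).subset ?_
    refine (Function.support_subset_iff'.2 fun m hm => ?_)
    have hm1 : m ∉ Function.support (f : M → ℂ) := fun h => hm (Set.mem_union_left _ h)
    have hm2 : m ∉ Function.support (g : M → ℂ) := fun h => hm (Set.mem_union_right _ h)
    have : (↑(f + g) : M → ℂ) m = f m + g m := by
      rw [lp.coeFn_add]; rfl
    rw [this, Function.notMem_support.mp hm1, Function.notMem_support.mp hm2, add_zero]
  zero_mem' := by
    have : (↑(0 : lp (fun _ : M => ℂ) 1) : M → ℂ) = 0 := lp.coeFn_zero _ _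
    exact Set.finite_empty.subset fun m hm => hm rfl
  smul_mem' := by
    intro c f hf
    refine hf.subset ?_
    refine Function.support_subset_iff'.2 fun m hm => ?_
    have : (↑(c • f) : M → ℂ) m = c • f m := by
      rw [lp.coeFn_smul]; rfl
    rw [this, Function.notMem_support.mp hm, smul_zero]

noncomputable section

namespace Stmt15Aux

/-! ### Generic lemmas about `l10` -/

variable {M : Type}

/-- Coordinate of an element of `l10 M`. -/
def cf (f : ↥(l10 M)) (m : M) : ℂ := ((f : lp (fun _ : M => ℂ) 1) : M → ℂ) m

theorem cf_finite (f : ↥(l10 M)) : (Function.support (cf f)).Finite := f.2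

theorem cf_add (f g : ↥(l10 M)) (m : M) : cf (f + g) m = cf f m + cf g m := by
  have h1 : ((f + g : ↥(l10 M)) : lp (fun _ : M => ℂ) 1) = (f : lp (fun _ : M => ℂ) 1) + g := rfl
  unfold cf
  rw [h1, lp.coeFn_add]
  rfl

theorem cf_smul (a : ℂ) (f : ↥(l10 M)) (m : M) : cf (a • f) m = a * cf f m := by
  have h1 : ((a • f : ↥(l10 M)) : lp (fun _ : M => ℂ) 1) = a • (f : lp (fun _ : M => ℂ) 1) := rfl
  unfold cf
  rw [h1, lp.coeFn_smul]
  rfl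

theorem cf_zero (m : M) : cf (0 : ↥(l10 M)) m = 0 := by
  have h1 : ((0 : ↥(l10 M)) : lp (fun _ : M => ℂ) 1) = 0 := rfl
  unfold cf
  rw [h1, lp.coeFn_zero]
  rfl

theorem cf_neg (f : ↥(l10 M)) (m : M) : cf (-f) m = - cf f m := by
  have h1 : ((-f : ↥(l10 M)) : lp (fun _ : M => ℂ) 1) = -(f : lp (fun _ : M => ℂ) 1) := rfl
  unfold cf
  rw [h1, lp.coeFn_neg]
  rfl

theorem cf_sub (f g : ↥(l10 M)) (m : M) : cf (f - g) m = cf f m - cf g m := by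
  rw [sub_eq_add_neg, cf_add, cf_neg, sub_eq_add_neg]

theorem hasSum_norm_cf (f : ↥(l10 M)) : HasSum (fun m => ‖cf f m‖) ‖f‖ := by
  have := lp.hasSum_norm (p := 1) (by norm_num) (f : lp (fun _ : M => ℂ) 1)
  simpa [cf] using this

theorem summable_norm_cf (f : ↥(l10 M)) : Summable (fun m => ‖cf f m‖) :=
  (hasSum_norm_cf f).summable

theorem norm_eq_tsum_cf (f : ↥(l10 M)) : ‖f‖ = ∑' m, ‖cf f m‖ :=
  (hasSum_norm_cf f).tsum_eq.symm

theorem norm_eq_sum_cf (f : ↥(l10 M)) :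
    ‖f‖ = ∑ m ∈ (cf_finite f).toFinset, ‖cf f m‖ := by
  rw [norm_eq_tsum_cf]
  refine tsum_eq_sum ?_
  intro m hm
  have : cf f m = 0 := by
    by_contra h
    exact hm ((cf_finite f).mem_toFinset.2 h)
  simp [this]

/-- The canonical basis vector of `l10 M`. -/
def single10 (m : M) (a : ℂ) : ↥(l10 M) := by
  classical
  exact ⟨lp.single 1 m a, by
    change (Function.support _).Finite
    refine Set.Finite.subset (Set.finite_singleton m) ?_
    intro j hj
    simp only [Function.mem_support] at hj
    by_contra h
    have := lp.single_apply_ne (E := fun _ : M => ℂ) 1 m a (show j ≠ m from h)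
    exact hj this⟩

theorem cf_single10_self (m : M) (a : ℂ) : cf (single10 m a) m = a := by
  classical
  unfold cf single10
  exact lp.single_apply_self (E := fun _ : M => ℂ) 1 m a

theorem cf_single10_ne (m : M) (a : ℂ) {j : M} (hj : j ≠ m) : cf (single10 m a) j = 0 := by
  classical
  unfold cf single10
  exact lp.single_apply_ne (E := fun _ : M => ℂ) 1 m a hj

theorem norm_single10 (m : M) (a : ℂ) : ‖single10 m a‖ = ‖a‖ := by
  classical
  have : ‖single10 m a‖ = ‖lp.single (E := fun _ : M => ℂ) 1 m a‖ := rfl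
  rw [this]
  simpa using lp.norm_single (E := fun _ : M => ℂ) (p := 1) (by norm_num) (fun _ => a) m

end Stmt15Aux

end
noncomputable section
namespace Stmt15Aux

/-! ### The free cover `τ : l10 (BallT P) → P` -/

variable {P : Type} [NormedAddCommGroup P] [NormedSpace ℂ P]

/-- The closed unit ball of `P` as a type. -/
def BallT (P : Type) [NormedAddCommGroup P] : Type := {x : P // ‖x‖ ≤ 1}

/-- The candidate quotient map. -/
def tauFun (f : ↥(l10 (BallT P))) : P := ∑ᶠ γ, cf f γ • (γ.val : P)

theorem tau_support (f : ↥(l10 (BallT P))) :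
    Function.support (fun γ : BallT P => cf f γ • (γ.val : P)) ⊆ Function.support (cf f) := by
  intro γ hγ
  simp only [Function.mem_support] at hγ ⊢
  intro h
  exact hγ (by rw [h, zero_smul])

theorem tau_support_finite (f : ↥(l10 (BallT P))) :
    (Function.support (fun γ : BallT P => cf f γ • (γ.val : P))).Finite :=
  (cf_finite f).subset (tau_support f)

theorem tauFun_add (f g : ↥(l10 (BallT P))) : tauFun (f + g) = tauFun f + tauFun g := by
  unfold tauFun
  have h1 : (fun γ : BallT P => cf (f + g) γ • (γ.val : P)) =
      fun γ => cf f γ • (γ.val : P) + cf g γ • (γ.val : P) := by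
    funext γ; rw [cf_add, add_smul]
  rw [h1]
  exact finsum_add_distrib (tau_support_finite f) (tau_support_finite g)

theorem tauFun_smul (a : ℂ) (f : ↥(l10 (BallT P))) : tauFun (a • f) = a • tauFun f := by
  unfold tauFun
  have h1 : (fun γ : BallT P => cf (a • f) γ • (γ.val : P)) =
      fun γ => a • (cf f γ • (γ.val : P)) := by
    funext γ; rw [cf_smul, mul_smul]
  rw [h1, smul_finsum]

theorem tauFun_eq_sum (f : ↥(l10 (BallT P))) :
    tauFun f = ∑ γ ∈ (cf_finite f).toFinset, cf f γ • (γ.val : P) := by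
  exact finsum_eq_finset_sum_of_support_subset _
    (by simpa using tau_support f)

theorem tauFun_norm_le (f : ↥(l10 (BallT P))) : ‖tauFun f‖ ≤ ‖f‖ := by
  rw [tauFun_eq_sum, norm_eq_sum_cf f]
  refine le_trans (norm_sum_le _ _) (Finset.sum_le_sum ?_)
  intro γ _
  rw [norm_smul]
  calc ‖cf f γ‖ * ‖(γ.val : P)‖ ≤ ‖cf f γ‖ * 1 := by
        exact mul_le_mul_of_nonneg_left γ.2 (norm_nonneg _)
    _ = ‖cf f γ‖ := mul_one _

theorem tauFun_single (γ : BallT P) (a : ℂ) : tauFun (single10 γ a) = a • (γ.val : P) := by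
  unfold tauFun
  refine finsum_eq_single _ γ ?_ |>.trans (by rw [cf_single10_self])
  intro j hj
  rw [cf_single10_ne _ _ hj, zero_smul]

/-- `τ` as a continuous linear map. -/
def tauL : ↥(l10 (BallT P)) →L[ℂ] P :=
  LinearMap.mkContinuous
    { toFun := tauFun
      map_add' := tauFun_add
      map_smul' := tauFun_smul } 1
    (fun f => by simpa using tauFun_norm_le f)

theorem tauL_apply (f : ↥(l10 (BallT P))) : tauL f = tauFun f := rfl

theorem tauL_ball : tauL '' Metric.closedBall 0 1 = Metric.closedBall (0 : P) 1 := by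
  apply Set.Subset.antisymm
  · rintro x ⟨f, hf, rfl⟩
    rw [Metric.mem_closedBall, dist_zero_right] at hf ⊢
    exact le_trans (tauFun_norm_le f) hf
  · intro x hx
    rw [Metric.mem_closedBall, dist_zero_right] at hx
    refine ⟨single10 ⟨x, hx⟩ 1, ?_, ?_⟩
    · rw [Metric.mem_closedBall, dist_zero_right]
      exact (norm_single10 (M := BallT P) _ (1 : ℂ)).le.trans (by norm_num)
    · rw [tauL_apply]; exact (tauFun_single _ _).trans (one_smul _ _)

end Stmt15Aux
end
noncomputable section
namespace Stmt15Aux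

/-! ### Extreme point generalities -/

theorem extreme_of_convex_comb {E : Type*} [AddCommGroup E] [Module ℝ E] {s : Set E}
    (hs : Convex ℝ s) {x : E} (hx : x ∈ s.extremePoints ℝ) {ι : Type*} (t : Finset ι)
    (y : ι → E) (hy : ∀ i ∈ t, y i ∈ s) :
    ∀ w : ι → ℝ, (∀ i ∈ t, 0 < w i) → (∑ i ∈ t, w i) = 1 →
      (∑ i ∈ t, w i • y i) = x → ∀ i ∈ t, y i = x := by
  classical
  induction t using Finset.induction_on with
  | empty => intro w _ h1 _; simp at h1
  | @insert i t hit IH =>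
    intro w hw h1 hsum j hj
    rw [Finset.sum_insert hit] at h1 hsum
    set cr := ∑ k ∈ t, w k with hcr
    have hcr0 : 0 ≤ cr := Finset.sum_nonneg fun k hk => le_of_lt (hw k (Finset.mem_insert_of_mem hk))
    rcases eq_or_lt_of_le hcr0 with hc | hc
    · -- all the weights in t vanish, so t is empty
      have ht : t = ∅ := by
        by_contra hne
        obtain ⟨k, hk⟩ := Finset.nonempty_iff_ne_empty.2 hne
        have hk0 : w k = 0 := by
          have := Finset.sum_eq_zero_iff_of_nonneg
            (fun k hk => le_of_lt (hw k (Finset.mem_insert_of_mem hk))) |>.1 hc.symm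
          exact this k hk
        exact absurd hk0 (ne_of_gt (hw k (Finset.mem_insert_of_mem hk)))
      subst ht
      rw [hcr] at h1
      simp only [Finset.sum_empty, add_zero] at h1 hsum
      rw [h1, one_smul] at hsum
      simp only [Finset.mem_insert, Finset.notMem_empty, or_false] at hj
      rw [hj, hsum]
    · -- the rest has positive total weight
      have hwi : 0 < w i := hw i (Finset.mem_insert_self i t)
      set z := cr⁻¹ • ∑ k ∈ t, w k • y k with hz
      have hzsum : z = ∑ k ∈ t, (cr⁻¹ * w k) • y k := by
        rw [hz, Finset.smul_sum]
        exact Finset.sum_congr rfl fun k _ => (smul_smul _ _ _)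
      have hzs : z ∈ s := by
        rw [hzsum]
        refine hs.sum_mem (fun k hk => le_of_lt (mul_pos (inv_pos.2 hc) (hw k (Finset.mem_insert_of_mem hk)))) ?_ (fun k hk => hy k (Finset.mem_insert_of_mem hk))
        rw [← Finset.mul_sum, ← hcr, inv_mul_cancel₀ (ne_of_gt hc)]
      have hxseg : x ∈ openSegment ℝ (y i) z := by
        refine ⟨w i, cr, hwi, hc, h1, ?_⟩
        rw [hz, smul_inv_smul₀ (ne_of_gt hc)]
        exact hsum
      obtain ⟨hyi, hzz⟩ := (mem_extremePoints.1 hx).2 _ (hy i (Finset.mem_insert_self i t)) _ hzs hxseg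
      rcases Finset.mem_insert.1 hj with rfl | hjt
      · exact hyi
      · refine IH (fun k hk => hy k (Finset.mem_insert_of_mem hk)) (fun k => cr⁻¹ * w k)
          (fun k hk => mul_pos (inv_pos.2 hc) (hw k (Finset.mem_insert_of_mem hk))) ?_ ?_ j hjt
        · rw [← Finset.mul_sum, ← hcr, inv_mul_cancel₀ (ne_of_gt hc)]
        · rw [← hzsum]; exact hzz

variable {P : Type} [NormedAddCommGroup P] [NormedSpace ℂ P]

theorem norm_eq_one_of_extreme [Nontrivial P] {u : P}
    (hu : u ∈ (Metric.closedBall (0 : P) 1).extremePoints ℝ) : ‖u‖ = 1 := by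
  have hle : ‖u‖ ≤ 1 := by
    have := hu.1
    rwa [Metric.mem_closedBall, dist_zero_right] at this
  by_contra hne
  have hlt : ‖u‖ < 1 := lt_of_le_of_ne hle hne
  obtain ⟨z, hz⟩ := exists_ne (0 : P)
  have hz0 : 0 < ‖z‖ := norm_pos_iff.2 hz
  set ε : ℝ := (1 - ‖u‖) / ‖z‖ with hε
  have hε0 : 0 < ε := div_pos (by linarith) hz0
  have hεz : ‖ε • z‖ = 1 - ‖u‖ := by
    rw [norm_smul, Real.norm_eq_abs, abs_of_pos hε0, hε, div_mul_cancel₀ _ (ne_of_gt hz0)]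
  have h1 : u + ε • z ∈ Metric.closedBall (0 : P) 1 := by
    rw [Metric.mem_closedBall, dist_zero_right]
    calc ‖u + ε • z‖ ≤ ‖u‖ + ‖ε • z‖ := norm_add_le _ _
      _ = 1 := by rw [hεz]; ring
  have h2 : u - ε • z ∈ Metric.closedBall (0 : P) 1 := by
    rw [Metric.mem_closedBall, dist_zero_right]
    calc ‖u - ε • z‖ ≤ ‖u‖ + ‖ε • z‖ := norm_sub_le _ _
      _ = 1 := by rw [hεz]; ring
  have hseg : u ∈ openSegment ℝ (u + ε • z) (u - ε • z) := by
    refine ⟨(1:ℝ)/2, (1:ℝ)/2, by norm_num, by norm_num, by norm_num, ?_⟩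
    rw [smul_add, smul_sub]
    module
  obtain ⟨he, _⟩ := (mem_extremePoints.1 hu).2 _ h1 _ h2 hseg
  have : ε • z = 0 := by
    have := congrArg (fun w => w - u) he
    simpa [add_sub_cancel_left] using this
  exact hz (by simpa [ne_of_gt hε0, smul_eq_zero] using this)

end Stmt15Aux
end
noncomputable section
namespace Stmt15Aux

variable {P : Type} [NormedAddCommGroup P] [NormedSpace ℂ P]

theorem tauFun_sub (f g : ↥(l10 (BallT P))) : tauFun (f - g) = tauFun f - tauFun g := by
  have h : f - g = f + (-1 : ℂ) • g := by rw [neg_one_smul, ← sub_eq_add_neg]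
  rw [h, tauFun_add, tauFun_smul, neg_one_smul, ← sub_eq_add_neg]

section psi

variable (ψ : P →L[ℂ] ↥(l10 (BallT P)))

/-- The key splitting lemma: the norm of `p` splits off the `γ`-coordinate of its lift. -/
theorem split (hiso : ∀ p, ‖ψ p‖ = ‖p‖) (hright : ∀ p, tauFun (ψ p) = p)
    (p : P) (γ : BallT P) :
    ‖p‖ = ‖cf (ψ p) γ‖ + ‖p - cf (ψ p) γ • (γ.val : P)‖ := by
  classical
  set a := cf (ψ p) γ with ha
  set e := single10 γ a with he
  have h1 : ‖ψ p‖ = ‖a‖ + ‖ψ p - e‖ := by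
    rw [norm_eq_tsum_cf (ψ p), norm_eq_tsum_cf (ψ p - e)]
    rw [Summable.tsum_eq_add_tsum_ite (summable_norm_cf (ψ p)) γ]
    congr 1
    refine tsum_congr fun δ => ?_
    by_cases hδ : δ = γ
    · subst hδ
      rw [if_pos rfl, cf_sub, he, cf_single10_self, ← ha, sub_self, norm_zero]
    · rw [if_neg hδ, cf_sub, he, cf_single10_ne _ _ hδ, sub_zero]
  have h2 : p - a • (γ.val : P) = tauFun (ψ p - e) := by
    rw [tauFun_sub, hright, he, tauFun_single]
  have h3 : ‖p - a • (γ.val : P)‖ ≤ ‖ψ p - e‖ := by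
    rw [h2]; exact tauFun_norm_le _
  have h4 : ‖p‖ ≤ ‖a‖ + ‖p - a • (γ.val : P)‖ := by
    have : p = a • (γ.val : P) + (p - a • (γ.val : P)) := by abel
    calc ‖p‖ = ‖a • (γ.val : P) + (p - a • (γ.val : P))‖ := by rw [← this]
      _ ≤ ‖a • (γ.val : P)‖ + ‖p - a • (γ.val : P)‖ := norm_add_le _ _
      _ ≤ ‖a‖ + ‖p - a • (γ.val : P)‖ := by
          refine add_le_add_left ?_ _
          rw [norm_smul]
          exact mul_le_mul_of_nonneg_left γ.2 (norm_nonneg _) |>.trans (le_of_eq (mul_one _))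
  have h5 : ‖p‖ = ‖a‖ + ‖ψ p - e‖ := (hiso p).symm.trans h1
  linarith

/-- Every extreme point `u` of the ball admits a coordinate `γ` on which its lift does not
vanish, and such that `γ` is a unimodular multiple of `u`. -/
theorem exists_rep [Nontrivial P] (hiso : ∀ p, ‖ψ p‖ = ‖p‖) (hright : ∀ p, tauFun (ψ p) = p)
    {u : P} (hu : u ∈ (Metric.closedBall (0 : P) 1).extremePoints ℝ) :
    ∃ γ : BallT P, cf (ψ u) γ ≠ 0 ∧
      cf (ψ u) γ • (γ.val : P) = ((‖cf (ψ u) γ‖ : ℝ) : ℂ) • u := by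
  have hnorm : ‖u‖ = 1 := norm_eq_one_of_extreme hu
  set s := (cf_finite (ψ u)).toFinset with hs
  have hsum_u : ∑ γ ∈ s, cf (ψ u) γ • (γ.val : P) = u := by
    rw [← tauFun_eq_sum]; exact hright u
  have hsum_norm : ∑ γ ∈ s, ‖cf (ψ u) γ‖ = 1 := by
    rw [← norm_eq_sum_cf, hiso, hnorm]
  have hmem : ∀ γ ∈ s, cf (ψ u) γ ≠ 0 := fun γ hγ => (cf_finite (ψ u)).mem_toFinset.1 hγ
  set y : BallT P → P := fun γ => (cf (ψ u) γ * ((‖cf (ψ u) γ‖ : ℝ) : ℂ)⁻¹) • (γ.val : P)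
    with hy
  have hynorm : ∀ γ ∈ s, y γ ∈ Metric.closedBall (0 : P) 1 := by
    intro γ hγ
    rw [Metric.mem_closedBall, dist_zero_right, hy, norm_smul, norm_mul, norm_inv]
    have h0 : ‖cf (ψ u) γ‖ ≠ 0 := norm_ne_zero_iff.2 (hmem γ hγ)
    rw [Complex.norm_real, Real.norm_eq_abs, abs_of_nonneg (norm_nonneg _)]
    rw [mul_inv_cancel₀ h0, one_mul]
    exact γ.2
  have hkey : ∀ γ ∈ s, (‖cf (ψ u) γ‖ : ℝ) • y γ = cf (ψ u) γ • (γ.val : P) := by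
    intro γ hγ
    have h0 : ((‖cf (ψ u) γ‖ : ℝ) : ℂ) ≠ 0 := by
      simpa using norm_ne_zero_iff.2 (hmem γ hγ)
    rw [hy, ← smul_assoc, Complex.real_smul]
    congr 1
    rw [mul_comm (cf (ψ u) γ), ← mul_assoc, mul_inv_cancel₀ h0, one_mul]
  have hcomb : ∑ γ ∈ s, ‖cf (ψ u) γ‖ • y γ = u := by
    conv_rhs => rw [← hsum_u]
    exact Finset.sum_congr rfl hkey
  have hall : ∀ γ ∈ s, y γ = u :=
    extreme_of_convex_comb (convex_closedBall (0 : P) 1) hu s y hynorm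
      (fun γ => ‖cf (ψ u) γ‖) (fun γ hγ => norm_pos_iff.2 (hmem γ hγ)) hsum_norm hcomb
  have hsne : s.Nonempty := by
    by_contra h
    rw [Finset.not_nonempty_iff_eq_empty] at h
    rw [h, Finset.sum_empty] at hsum_norm
    norm_num at hsum_norm
  obtain ⟨γ₀, hγ₀⟩ := hsne
  refine ⟨γ₀, hmem γ₀ hγ₀, ?_⟩
  have hcast : ((‖cf (ψ u) γ₀‖ : ℝ) : ℂ) • u = (‖cf (ψ u) γ₀‖ : ℝ) • u := by
    rw [← algebraMap_smul ℂ (‖cf (ψ u) γ₀‖ : ℝ) u]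
    norm_num
  rw [hcast, ← hkey γ₀ hγ₀, hall γ₀ hγ₀]

end psi

end Stmt15Aux
end
noncomputable section
namespace Stmt15Aux

variable {P : Type} [NormedAddCommGroup P] [NormedSpace ℂ P]
variable (ψ : P →L[ℂ] ↥(l10 (BallT P)))

/-- Two non-proportional extreme points have disjoint lift supports (at the chosen coord). -/
theorem coord_zero_of_not_rel [Nontrivial P]
    (hiso : ∀ p, ‖ψ p‖ = ‖p‖) (hright : ∀ p, tauFun (ψ p) = p)
    {u v : P} (hv : v ∈ (Metric.closedBall (0 : P) 1).extremePoints ℝ)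
    (hune : ‖u‖ = 1)
    (hne : ¬ ∃ θ : ℂ, ‖θ‖ = 1 ∧ θ • u = v) {γ : BallT P} (hγ : cf (ψ u) γ ≠ 0)
    (hrep : cf (ψ u) γ • (γ.val : P) = ((‖cf (ψ u) γ‖ : ℝ) : ℂ) • u) :
    cf (ψ v) γ = 0 := by
  set a := cf (ψ u) γ with ha
  set b := cf (ψ v) γ with hb
  by_contra hb0
  have hvnorm : ‖v‖ = 1 := norm_eq_one_of_extreme hv
  have hγval : (γ.val : P) = (((‖a‖ : ℝ) : ℂ) * a⁻¹) • u := by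
    have h := congrArg (fun w => a⁻¹ • w) hrep
    simp only [smul_smul] at h
    rw [inv_mul_cancel₀ hγ, one_smul, mul_comm a⁻¹] at h
    exact h
  have hsplit := split ψ hiso hright v γ
  rw [hvnorm, ← hb] at hsplit
  set μ : ℂ := b * ((‖a‖ : ℝ) : ℂ) * a⁻¹ with hμ
  have hbγ : b • (γ.val : P) = μ • u := by
    rw [hγval, smul_smul, hμ, mul_assoc]
  have hμnorm : ‖μ‖ = ‖b‖ := by
    rw [hμ, norm_mul, norm_mul, norm_inv]
    rw [Complex.norm_real, Real.norm_eq_abs, abs_of_nonneg (norm_nonneg _)]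
    have hA : ‖a‖ ≠ 0 := norm_ne_zero_iff.2 hγ
    rw [mul_assoc, mul_comm ‖a‖, inv_mul_cancel₀ hA, mul_one]
  set w := v - μ • u with hw
  have hwnorm : ‖w‖ = 1 - ‖b‖ := by
    have : ‖v - b • (γ.val : P)‖ = ‖w‖ := by rw [hbγ]
    linarith [hsplit, this.symm]
  by_cases hw0 : w = 0
  · -- v = μ • u with μ unimodular
    have hveq : v = μ • u := by
      have := hw0
      rw [hw, sub_eq_zero] at this
      exact this
    have hμ1 : ‖μ‖ = 1 := by
      have : (0:ℝ) = 1 - ‖b‖ := by rw [← hwnorm, hw0, norm_zero]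
      rw [hμnorm]; linarith
    exact hne ⟨μ, hμ1, hveq.symm⟩
  · have hwpos : 0 < ‖w‖ := norm_pos_iff.2 hw0
    have hbpos : 0 < ‖b‖ := norm_pos_iff.2 hb0
    set y₁ : P := (μ * ((‖b‖ : ℝ) : ℂ)⁻¹) • u with hy₁
    set y₂ : P := (‖w‖)⁻¹ • w with hy₂
    have hbne : ((‖b‖ : ℝ) : ℂ) ≠ 0 := by
      simpa using norm_ne_zero_iff.2 hb0
    have hy₁norm : ‖y₁‖ = 1 := by
      rw [hy₁, norm_smul, norm_mul, norm_inv, hμnorm, hune,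
        Complex.norm_real, Real.norm_eq_abs, abs_of_nonneg (norm_nonneg _)]
      rw [mul_inv_cancel₀ (norm_ne_zero_iff.2 hb0), mul_one]
    have hy₂norm : ‖y₂‖ = 1 := by
      rw [hy₂, norm_smul, norm_inv, Real.norm_eq_abs, abs_of_nonneg (le_of_lt hwpos)]
      rw [inv_mul_cancel₀ (ne_of_gt hwpos)]
    have hy₁mem : y₁ ∈ Metric.closedBall (0 : P) 1 := by
      rw [Metric.mem_closedBall, dist_zero_right, hy₁norm]
    have hy₂mem : y₂ ∈ Metric.closedBall (0 : P) 1 := by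
      rw [Metric.mem_closedBall, dist_zero_right, hy₂norm]
    have hseg : v ∈ openSegment ℝ y₁ y₂ := by
      refine ⟨‖b‖, ‖w‖, hbpos, hwpos, by linarith [hwnorm], ?_⟩
      have h1 : (‖b‖ : ℝ) • y₁ = μ • u := by
        rw [hy₁, ← smul_assoc, Complex.real_smul]
        congr 1
        rw [mul_comm μ, ← mul_assoc, mul_inv_cancel₀ hbne, one_mul]
      have h2 : (‖w‖ : ℝ) • y₂ = w := by
        rw [hy₂, smul_inv_smul₀ (ne_of_gt hwpos)]
      rw [h1, h2, hw]
      abel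
    obtain ⟨he1, _⟩ := (mem_extremePoints.1 hv).2 _ hy₁mem _ hy₂mem hseg
    refine hne ⟨μ * ((‖b‖ : ℝ) : ℂ)⁻¹, ?_, by rw [← hy₁, he1]⟩
    rw [norm_mul, norm_inv, hμnorm, Complex.norm_real, Real.norm_eq_abs,
      abs_of_nonneg (norm_nonneg _)]
    rw [mul_inv_cancel₀ (norm_ne_zero_iff.2 hb0)]

end Stmt15Aux
end
noncomputable section
namespace Stmt15Aux

variable {P : Type} [NormedAddCommGroup P] [NormedSpace ℂ P]
variable (ψ : P →L[ℂ] ↥(l10 (BallT P)))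

/-- `ℂ u` is an `L`-summand relative to vectors whose lift vanishes at `γ`. -/
theorem norm_smul_add_of_coord_zero
    (hiso : ∀ p, ‖ψ p‖ = ‖p‖) (hright : ∀ p, tauFun (ψ p) = p)
    {u : P} (hune : ‖u‖ = 1) {γ : BallT P} (hγ : cf (ψ u) γ ≠ 0)
    (hrep : cf (ψ u) γ • (γ.val : P) = ((‖cf (ψ u) γ‖ : ℝ) : ℂ) • u)
    {g : P} (hg : cf (ψ g) γ = 0) (b : ℂ) :
    ‖b • u + g‖ = ‖b‖ + ‖g‖ := by
  set a := cf (ψ u) γ with ha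
  set lam := ‖a‖ with hlam
  have hlam0 : 0 < lam := norm_pos_iff.2 hγ
  have hcoord : ∀ t : ℂ, cf (ψ (t • u + g)) γ = t * a := by
    intro t
    have : ψ (t • u + g) = t • ψ u + ψ g := by
      rw [map_add, map_smul]
    rw [this, cf_add, cf_smul, hg, add_zero, ha]
  have hsmul : ∀ t : ℂ, (t * a) • (γ.val : P) = (t * lam) • u := by
    intro t
    rw [mul_smul, hrep, smul_smul]
  have key : ∀ t : ℂ, ‖t • u + g‖ = lam * ‖t‖ + ‖(t * (((1 - lam : ℝ)) : ℂ)) • u + g‖ := by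
    intro t
    have h := split ψ hiso hright (t • u + g) γ
    rw [hcoord t] at h
    have hrw : t • u + g - (t * a) • (γ.val : P) = (t * (((1 - lam : ℝ)) : ℂ)) • u + g := by
      rw [hsmul t]
      have h2 : (t * (((1 - lam : ℝ)) : ℂ)) • u = t • u - (t * (lam : ℂ)) • u := by
        push_cast
        rw [mul_sub, sub_smul, mul_one]
      rw [h2]
      abel
    rw [hrw] at h
    rw [h, norm_mul]
    ring
  have hlam1 : lam ≤ 1 := by
    have h := split ψ hiso hright u γ
    rw [hune, ← ha, ← hlam] at h
    linarith [norm_nonneg (u - a • (γ.val : P))]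
  rcases eq_or_lt_of_le hlam1 with hl1 | hl1
  · -- lam = 1 : single application of key
    have hkb := key b
    rw [hl1] at hkb
    simpa using hkb
  · -- iterate and pass to the limit
    set r : ℝ := 1 - lam with hr
    have hr0 : 0 ≤ r := by linarith
    have hr1 : r < 1 := by linarith
    have H : ∀ k : ℕ, ‖b • u + g‖ - ‖b‖ = ‖(b * ((r ^ k : ℝ) : ℂ)) • u + g‖ - r ^ k * ‖b‖ := by
      intro k
      induction k with
      | zero => simp
      | succ k IH =>
        have hk := key (b * ((r ^ k : ℝ) : ℂ))
        have hnorm : ‖b * ((r ^ k : ℝ) : ℂ)‖ = r ^ k * ‖b‖ := by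
          rw [norm_mul, Complex.norm_real, Real.norm_eq_abs, abs_of_nonneg (pow_nonneg hr0 k)]
          ring
        have harg : (b * ((r ^ k : ℝ) : ℂ)) * (((1 - lam : ℝ)) : ℂ) = b * ((r ^ (k+1) : ℝ) : ℂ) := by
          rw [hr]
          push_cast
          ring
        rw [hnorm, harg] at hk
        rw [IH, hk]
        ring
    -- limits
    have hlim1 : Filter.Tendsto (fun k : ℕ => ‖(b * ((r ^ k : ℝ) : ℂ)) • u + g‖ - r ^ k * ‖b‖)
        Filter.atTop (nhds (‖g‖ - 0)) := by
      have hrpow : Filter.Tendsto (fun k : ℕ => (r ^ k : ℝ)) Filter.atTop (nhds 0) :=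
        tendsto_pow_atTop_nhds_zero_of_lt_one hr0 hr1
      have h1 : Filter.Tendsto (fun k : ℕ => ‖(b * ((r ^ k : ℝ) : ℂ)) • u + g‖)
          Filter.atTop (nhds ‖g‖) := by
        have hc : Continuous fun x : ℝ => ‖(b * (x : ℂ)) • u + g‖ :=
          (((continuous_const.mul Complex.continuous_ofReal).smul
            continuous_const).add continuous_const).norm
        have := (hc.tendsto 0).comp hrpow
        simpa [Function.comp_def] using this
      have h2 : Filter.Tendsto (fun k : ℕ => r ^ k * ‖b‖) Filter.atTop (nhds 0) := by
        simpa using hrpow.mul_const ‖b‖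
      exact h1.sub h2
    have hconst : Filter.Tendsto (fun _ : ℕ => ‖b • u + g‖ - ‖b‖) Filter.atTop
        (nhds (‖b • u + g‖ - ‖b‖)) := tendsto_const_nhds
    have : ‖b • u + g‖ - ‖b‖ = ‖g‖ - 0 := by
      refine tendsto_nhds_unique ?_ hlim1
      have : (fun k : ℕ => ‖(b * ((r ^ k : ℝ) : ℂ)) • u + g‖ - r ^ k * ‖b‖) =
          fun _ : ℕ => ‖b • u + g‖ - ‖b‖ := by
        funext k; exact (H k).symm
      rw [this]
      exact hconst
    linarith

end Stmt15Aux
end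
noncomputable section
namespace Stmt15Aux

variable {P : Type} [NormedAddCommGroup P] [NormedSpace ℂ P]
variable (ψ : P →L[ℂ] ↥(l10 (BallT P)))

/-- Extreme points of the ball of a "support subspace" are extreme in the whole ball. -/
theorem extreme_inter_subset
    (hiso : ∀ p, ‖ψ p‖ = ‖p‖) {p : P} (hp0 : p ≠ 0) (W : Submodule ℂ P)
    (hWdef : ∀ q, q ∈ W ↔ ∀ γ, cf (ψ p) γ = 0 → cf (ψ q) γ = 0) :
    (Metric.closedBall (0 : P) 1 ∩ ↑W).extremePoints ℝ ⊆
      (Metric.closedBall (0 : P) 1).extremePoints ℝ := by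
  intro g hg
  have hgK := hg.1
  have hgb : g ∈ Metric.closedBall (0 : P) 1 := hgK.1
  have hgW : g ∈ W := hgK.2
  have hpW : p ∈ W := (hWdef p).2 fun γ h => h
  -- first, g has norm one
  have hg1 : ‖g‖ = 1 := by
    have hgle : ‖g‖ ≤ 1 := by rwa [Metric.mem_closedBall, dist_zero_right] at hgb
    by_contra hne
    have hlt : ‖g‖ < 1 := lt_of_le_of_ne hgle hne
    have hp' : 0 < ‖p‖ := norm_pos_iff.2 hp0
    set ε : ℝ := (1 - ‖g‖) / ‖p‖ with hε
    have hε0 : 0 < ε := div_pos (by linarith) hp'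
    set q : P := ((ε : ℝ) : ℂ) • p with hq
    have hqnorm : ‖q‖ = 1 - ‖g‖ := by
      rw [hq, norm_smul, Complex.norm_real, Real.norm_eq_abs, abs_of_pos hε0, hε,
        div_mul_cancel₀ _ (ne_of_gt hp')]
    have hqW : q ∈ W := W.smul_mem _ hpW
    have hmem1 : g + q ∈ Metric.closedBall (0 : P) 1 ∩ ↑W := by
      constructor
      · rw [Metric.mem_closedBall, dist_zero_right]
        calc ‖g + q‖ ≤ ‖g‖ + ‖q‖ := norm_add_le _ _
          _ = 1 := by rw [hqnorm]; ring
      · exact W.add_mem hgW hqW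
    have hmem2 : g - q ∈ Metric.closedBall (0 : P) 1 ∩ ↑W := by
      constructor
      · rw [Metric.mem_closedBall, dist_zero_right]
        calc ‖g - q‖ ≤ ‖g‖ + ‖q‖ := norm_sub_le _ _
          _ = 1 := by rw [hqnorm]; ring
      · exact W.sub_mem hgW hqW
    have hseg : g ∈ openSegment ℝ (g + q) (g - q) := by
      refine ⟨(1:ℝ)/2, (1:ℝ)/2, by norm_num, by norm_num, by norm_num, ?_⟩
      rw [smul_add, smul_sub]
      module
    obtain ⟨he, _⟩ := (mem_extremePoints.1 hg).2 _ hmem1 _ hmem2 hseg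
    have : q = 0 := by
      have := congrArg (fun w => w - g) he
      simpa [add_sub_cancel_left] using this
    rw [hq, smul_eq_zero] at this
    rcases this with h | h
    · exact absurd (by exact_mod_cast h) (ne_of_gt hε0)
    · exact hp0 h
  -- now prove extremality in the full ball
  refine ⟨hgb, ?_⟩
  intro h hh k hk hseg
  obtain ⟨th, tk, hth, htk, hsum1, hcomb⟩ := hseg
  have hhle : ‖h‖ ≤ 1 := by rwa [Metric.mem_closedBall, dist_zero_right] at hh
  have hkle : ‖k‖ ≤ 1 := by rwa [Metric.mem_closedBall, dist_zero_right] at hk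
  -- norms of h and k are 1
  have hhk1 : th * ‖h‖ + tk * ‖k‖ = 1 := by
    have hle1 : (1:ℝ) ≤ th * ‖h‖ + tk * ‖k‖ := by
      calc (1:ℝ) = ‖g‖ := hg1.symm
        _ = ‖th • h + tk • k‖ := by rw [hcomb]
        _ ≤ ‖th • h‖ + ‖tk • k‖ := norm_add_le _ _
        _ = th * ‖h‖ + tk * ‖k‖ := by
            rw [norm_smul, norm_smul, Real.norm_eq_abs, Real.norm_eq_abs,
              abs_of_pos hth, abs_of_pos htk]
    nlinarith
  have hh1 : ‖h‖ = 1 := by nlinarith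
  have hk1 : ‖k‖ = 1 := by nlinarith
  -- pass to ℂ-scalars
  have hcombC : ((th : ℝ) : ℂ) • h + ((tk : ℝ) : ℂ) • k = g := by
    rw [← hcomb]
    congr 1
  -- coordinatewise alignment
  have hcfg : ∀ γ, cf (ψ g) γ = ((th : ℝ) : ℂ) * cf (ψ h) γ + ((tk : ℝ) : ℂ) * cf (ψ k) γ := by
    intro γ
    rw [← hcombC, map_add, map_smul, map_smul, cf_add, cf_smul, cf_smul]
  have hAB : ∀ γ, ‖cf (ψ g) γ‖ ≤ th * ‖cf (ψ h) γ‖ + tk * ‖cf (ψ k) γ‖ := by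
    intro γ
    rw [hcfg γ]
    calc ‖((th : ℝ) : ℂ) * cf (ψ h) γ + ((tk : ℝ) : ℂ) * cf (ψ k) γ‖
        ≤ ‖((th : ℝ) : ℂ) * cf (ψ h) γ‖ + ‖((tk : ℝ) : ℂ) * cf (ψ k) γ‖ := norm_add_le _ _
      _ = th * ‖cf (ψ h) γ‖ + tk * ‖cf (ψ k) γ‖ := by
          rw [norm_mul, norm_mul, Complex.norm_real, Complex.norm_real,
            Real.norm_eq_abs, Real.norm_eq_abs, abs_of_pos hth, abs_of_pos htk]
  have hsumA : HasSum (fun γ => ‖cf (ψ g) γ‖) 1 := by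
    have := hasSum_norm_cf (ψ g)
    rwa [hiso, hg1] at this
  have hsumB : HasSum (fun γ => th * ‖cf (ψ h) γ‖ + tk * ‖cf (ψ k) γ‖) 1 := by
    have h1 := (hasSum_norm_cf (ψ h)).mul_left th
    have h2 := (hasSum_norm_cf (ψ k)).mul_left tk
    have h3 := h1.add h2
    rw [hiso, hiso, hh1, hk1, mul_one, mul_one, hsum1] at h3
    exact h3
  have hABeq : ∀ γ, th * ‖cf (ψ h) γ‖ + tk * ‖cf (ψ k) γ‖ - ‖cf (ψ g) γ‖ = 0 := by
    have hdiff : HasSum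
        (fun γ => th * ‖cf (ψ h) γ‖ + tk * ‖cf (ψ k) γ‖ - ‖cf (ψ g) γ‖) 0 := by
      have := hsumB.sub hsumA
      simpa using this
    have hnn : ∀ γ, 0 ≤ th * ‖cf (ψ h) γ‖ + tk * ‖cf (ψ k) γ‖ - ‖cf (ψ g) γ‖ :=
      fun γ => sub_nonneg.2 (hAB γ)
    have hz := (hasSum_zero_iff_of_nonneg hnn).1 hdiff
    intro γ; exact congrFun hz γ
  -- conclude h, k ∈ W
  have hhW : h ∈ W ∧ k ∈ W := by
    constructor <;> rw [hWdef] <;> intro γ hγ0 <;>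
    · have hgγ : cf (ψ g) γ = 0 := (hWdef g).1 hgW γ hγ0
      have hBγ : th * ‖cf (ψ h) γ‖ + tk * ‖cf (ψ k) γ‖ = 0 := by
        have h5 := hABeq γ
        rw [hgγ, norm_zero] at h5
        linarith
      have h1 : 0 ≤ th * ‖cf (ψ h) γ‖ := mul_nonneg (le_of_lt hth) (norm_nonneg _)
      have h2 : 0 ≤ tk * ‖cf (ψ k) γ‖ := mul_nonneg (le_of_lt htk) (norm_nonneg _)
      have h6 : th * ‖cf (ψ h) γ‖ = 0 ∧ tk * ‖cf (ψ k) γ‖ = 0 := by constructor <;> linarith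
      first
      | exact norm_eq_zero.1 ((mul_eq_zero.1 h6.1).resolve_left (ne_of_gt hth))
      | exact norm_eq_zero.1 ((mul_eq_zero.1 h6.2).resolve_left (ne_of_gt htk))
  exact hg.2 ⟨hh, hhW.1⟩ ⟨hk, hhW.2⟩ ⟨th, tk, hth, htk, hsum1, hcomb⟩

end Stmt15Aux
end
noncomputable section
namespace Stmt15Aux

variable {P : Type} [NormedAddCommGroup P] [NormedSpace ℂ P]
variable (ψ : P →L[ℂ] ↥(l10 (BallT P)))

/-- Every element lies in the span of the extreme points of the unit ball. -/
theorem mem_span_extreme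
    (hiso : ∀ p, ‖ψ p‖ = ‖p‖) (p : P) :
    p ∈ Submodule.span ℂ ((Metric.closedBall (0 : P) 1).extremePoints ℝ) := by
  classical
  -- reduce to the case of elements of the ball
  by_cases hp0 : p = 0
  · rw [hp0]; exact Submodule.zero_mem _
  have hmain : ∀ q : P, q ≠ 0 → ‖q‖ ≤ 1 →
      q ∈ Submodule.span ℂ ((Metric.closedBall (0 : P) 1).extremePoints ℝ) := by
    intro q hq0 hq1
    -- the support subspace
    set W : Submodule ℂ P :=
      { carrier := {x : P | ∀ γ, cf (ψ q) γ = 0 → cf (ψ x) γ = 0}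
        add_mem' := by
          intro a b ha hb γ hγ
          rw [map_add, cf_add, ha γ hγ, hb γ hγ, add_zero]
        zero_mem' := by
          intro γ hγ
          rw [map_zero, cf_zero]
        smul_mem' := by
          intro c a ha γ hγ
          rw [map_smul, cf_smul, ha γ hγ, mul_zero] } with hW
    have hWdef : ∀ x, x ∈ W ↔ ∀ γ, cf (ψ q) γ = 0 → cf (ψ x) γ = 0 := fun x => Iff.rfl
    have hqW : q ∈ W := fun γ h => h
    -- W is finite dimensional
    have hfd : FiniteDimensional ℂ ↥W := by
      set S := (cf_finite (ψ q)).toFinset with hS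
      set J : ↥W →ₗ[ℂ] ({γ // γ ∈ S} → ℂ) :=
        { toFun := fun x => fun γ => cf (ψ x.val) γ.val
          map_add' := by
            intro a b
            funext γ
            simp only [Submodule.coe_add, map_add, cf_add]
            rfl
          map_smul' := by
            intro c a
            funext γ
            simp only [Submodule.coe_smul, map_smul, cf_smul]
            rfl } with hJ
      have hJinj : Function.Injective J := by
        intro a b hab
        have hzero : ∀ γ, cf (ψ (a.val - b.val)) γ = 0 := by
          intro γ
          by_cases hγS : γ ∈ S
          · have := congrFun hab ⟨γ, hγS⟩
            have h1 : cf (ψ a.val) γ = cf (ψ b.val) γ := this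
            rw [map_sub, cf_sub, h1, sub_self]
          · have hq0' : cf (ψ q) γ = 0 := by
              by_contra hcon
              exact hγS ((cf_finite (ψ q)).mem_toFinset.2 hcon)
            have ha0 := a.2 γ hq0'
            have hb0 := b.2 γ hq0'
            rw [map_sub, cf_sub, ha0, hb0, sub_self]
        have : ‖a.val - b.val‖ = 0 := by
          rw [← hiso, norm_eq_tsum_cf]
          have hz2 : ∀ m, cf (ψ a.val - ψ b.val) m = 0 := by
            intro m; rw [← map_sub]; exact hzero m
          simp [hz2]
        have := norm_eq_zero.1 this
        exact Subtype.ext (sub_eq_zero.1 this)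
      exact FiniteDimensional.of_injective J hJinj
    -- the compact convex set K
    set K : Set P := Metric.closedBall (0 : P) 1 ∩ ↑W with hK
    have hKim : K = Subtype.val '' (Metric.closedBall (0 : ↥W) 1) := by
      ext x
      constructor
      · rintro ⟨hx1, hx2⟩
        refine ⟨⟨x, hx2⟩, ?_, rfl⟩
        rw [Metric.mem_closedBall, dist_zero_right]
        rwa [Metric.mem_closedBall, dist_zero_right] at hx1
      · rintro ⟨w, hw, rfl⟩
        rw [Metric.mem_closedBall, dist_zero_right] at hw
        exact ⟨by rwa [Metric.mem_closedBall, dist_zero_right], w.2⟩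
    have hKcomp : IsCompact K := by
      rw [hKim]
      exact (isCompact_closedBall (0 : ↥W) 1).image continuous_subtype_val
    have hKconv : Convex ℝ K :=
      (convex_closedBall (0 : P) 1).inter (W.restrictScalars ℝ).convex
    have hpK : q ∈ K := ⟨by rwa [Metric.mem_closedBall, dist_zero_right], hqW⟩
    -- Krein-Milman
    have hKM := closure_convexHull_extremePoints hKcomp hKconv
    -- the span is closed in the relevant region
    set Z : Submodule ℂ P :=
      Submodule.span ℂ ((Metric.closedBall (0 : P) 1).extremePoints ℝ) ⊓ W with hZ
    have hZfd : FiniteDimensional ℂ ↥Z := Submodule.finiteDimensional_of_le inf_le_right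
    have hZclosed : IsClosed (↑Z : Set P) := Z.closed_of_finiteDimensional
    have hsub : convexHull ℝ (K.extremePoints ℝ) ⊆ ↑Z := by
      refine convexHull_min ?_ ((Z.restrictScalars ℝ).convex)
      intro u hu
      have huball := extreme_inter_subset ψ hiso hq0 W hWdef hu
      refine Submodule.mem_inf.2 ⟨Submodule.subset_span huball, (hu.1).2⟩
    have hqZ : q ∈ Z := by
      have h1 : q ∈ closure (convexHull ℝ (K.extremePoints ℝ)) := by rw [hKM]; exact hpK
      have h2 : closure (convexHull ℝ (K.extremePoints ℝ)) ⊆ ↑Z := by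
        rw [← hZclosed.closure_eq]
        exact closure_mono hsub
      exact h2 h1
    exact (Submodule.mem_inf.1 hqZ).1
  -- scale a general element into the ball
  have hq0 : (‖p‖ : ℝ) ≠ 0 := norm_ne_zero_iff.2 hp0
  have hscale : p = ((‖p‖ : ℝ) : ℂ) • (((‖p‖ : ℝ) : ℂ)⁻¹ • p) := by
    rw [smul_smul, mul_inv_cancel₀ (by exact_mod_cast hq0), one_smul]
  have hq' : (((‖p‖ : ℝ) : ℂ)⁻¹ • p) ≠ 0 := by
    simp [smul_eq_zero, hp0, hq0]
  have hq1 : ‖(((‖p‖ : ℝ) : ℂ)⁻¹ • p)‖ ≤ 1 := by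
    rw [norm_smul, norm_inv, Complex.norm_real, Real.norm_eq_abs,
      abs_of_nonneg (norm_nonneg _), inv_mul_cancel₀ hq0]
  rw [hscale]
  exact Submodule.smul_mem _ _ (hmain _ hq' hq1)

end Stmt15Aux
end
noncomputable section
namespace Stmt15Aux

theorem cf_sum {M : Type} {ι : Type*} (s : Finset ι) (f : ι → ↥(l10 M)) (m : M) :
    cf (∑ i ∈ s, f i) m = ∑ i ∈ s, cf (f i) m := by
  classical
  induction s using Finset.induction_on with
  | empty => simp [cf_zero]
  | @insert i t hit IH => rw [Finset.sum_insert hit, Finset.sum_insert hit, cf_add, IH]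

variable {P : Type} [NormedAddCommGroup P] [NormedSpace ℂ P]
variable (ψ : P →L[ℂ] ↥(l10 (BallT P)))

/-- Norm additivity on the span of pairwise non-proportional extreme points. -/
theorem norm_sum_eq [Nontrivial P]
    (hiso : ∀ p, ‖ψ p‖ = ‖p‖) (hright : ∀ p, tauFun (ψ p) = p)
    {ι : Type*} (U : ι → P)
    (hU : ∀ i, U i ∈ (Metric.closedBall (0 : P) 1).extremePoints ℝ)
    (hdist : ∀ i j, i ≠ j → ¬ ∃ θ : ℂ, ‖θ‖ = 1 ∧ θ • U i = U j)
    (s : Finset ι) (a : ι → ℂ) :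
    ‖∑ i ∈ s, a i • U i‖ = ∑ i ∈ s, ‖a i‖ := by
  classical
  induction s using Finset.induction_on with
  | empty => simp
  | @insert i t hit IH =>
    have hune : ‖U i‖ = 1 := norm_eq_one_of_extreme (hU i)
    obtain ⟨γ, hγ, hrep⟩ := exists_rep ψ hiso hright (hU i)
    set g := ∑ j ∈ t, a j • U j with hgdef
    have hg : cf (ψ g) γ = 0 := by
      have hψg : ψ g = ∑ j ∈ t, a j • ψ (U j) := by
        rw [hgdef, map_sum]
        exact Finset.sum_congr rfl fun j _ => by rw [map_smul]
      rw [hψg, cf_sum]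
      refine Finset.sum_eq_zero fun j hj => ?_
      have hij : i ≠ j := fun h => hit (h ▸ hj)
      have := coord_zero_of_not_rel ψ hiso hright (hU j) hune (hdist i j hij) hγ hrep
      rw [cf_smul, this, mul_zero]
    rw [Finset.sum_insert hit, Finset.sum_insert hit,
      norm_smul_add_of_coord_zero ψ hiso hright hune hγ hrep hg (a i), IH]

end Stmt15Aux
end
noncomputable section
namespace Stmt15Aux

variable {P : Type} [NormedAddCommGroup P] [NormedSpace ℂ P]

/-! ### Generic finite combinations indexed by a type -/

section combo

variable {M : Type} (r : M → P)

/-- Linear combination of the values of `r` with coefficients given by `f`. -/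
def combo (f : ↥(l10 M)) : P := ∑ᶠ m, cf f m • r m

theorem combo_support (f : ↥(l10 M)) :
    Function.support (fun m => cf f m • r m) ⊆ Function.support (cf f) := by
  intro m hm
  simp only [Function.mem_support] at hm ⊢
  intro h
  exact hm (by rw [h, zero_smul])

theorem combo_support_finite (f : ↥(l10 M)) :
    (Function.support (fun m => cf f m • r m)).Finite :=
  (cf_finite f).subset (combo_support r f)

theorem combo_add (f g : ↥(l10 M)) : combo r (f + g) = combo r f + combo r g := by
  unfold combo
  have h1 : (fun m => cf (f + g) m • r m) =
      fun m => cf f m • r m + cf g m • r m := by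
    funext m; rw [cf_add, add_smul]
  rw [h1]
  exact finsum_add_distrib (combo_support_finite r f) (combo_support_finite r g)

theorem combo_smul (a : ℂ) (f : ↥(l10 M)) : combo r (a • f) = a • combo r f := by
  unfold combo
  have h1 : (fun m => cf (a • f) m • r m) = fun m => a • (cf f m • r m) := by
    funext m; rw [cf_smul, mul_smul]
  rw [h1, smul_finsum]

theorem combo_eq_sum (f : ↥(l10 M)) :
    combo r f = ∑ m ∈ (cf_finite f).toFinset, cf f m • r m :=
  finsum_eq_finset_sum_of_support_subset _ (by simpa using combo_support r f)

theorem combo_single (m : M) (a : ℂ) : combo r (single10 m a) = a • r m := by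
  unfold combo
  refine finsum_eq_single _ m ?_ |>.trans (by rw [cf_single10_self])
  intro j hj
  rw [cf_single10_ne _ _ hj, zero_smul]

/-- `combo` as a linear map. -/
def comboL : ↥(l10 M) →ₗ[ℂ] P :=
  { toFun := combo r
    map_add' := combo_add r
    map_smul' := combo_smul r }

end combo

/-! ### The main construction in the nontrivial case -/

theorem nontrivial_case [Nontrivial P] (ψ : P →L[ℂ] ↥(l10 (BallT P)))
    (hiso : ∀ p, ‖ψ p‖ = ‖p‖) (hright : ∀ p, tauFun (ψ p) = p) :
    ∃ M : Type, Nonempty (P ≃ₗᵢ[ℂ] ↥(l10 M)) := by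
  classical
  set Ext : Set P := (Metric.closedBall (0 : P) 1).extremePoints ℝ with hExt
  -- the setoid identifying unimodular multiples
  set sE : Setoid ↥Ext :=
    { r := fun u v => ∃ θ : ℂ, ‖θ‖ = 1 ∧ θ • (u.val : P) = v.val
      iseqv := by
        constructor
        · intro u; exact ⟨1, by simp, one_smul _ _⟩
        · rintro u v ⟨θ, hθ, hv⟩
          have hθ0 : θ ≠ 0 := by intro h; rw [h] at hθ; simp at hθ
          refine ⟨θ⁻¹, by rw [norm_inv, hθ, inv_one], ?_⟩
          rw [← hv, smul_smul, inv_mul_cancel₀ hθ0, one_smul]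
        · rintro u v w ⟨θ₁, hθ₁, hv⟩ ⟨θ₂, hθ₂, hw⟩
          refine ⟨θ₂ * θ₁, by rw [norm_mul, hθ₁, hθ₂, mul_one], ?_⟩
          rw [mul_smul, hv, hw] } with hsE
  set M := Quotient sE with hM
  set rep : M → P := fun m => (Quotient.out m).val with hrep
  have hrepExt : ∀ m, rep m ∈ Ext := fun m => (Quotient.out m).2
  have hrep_distinct : ∀ m m' : M, m ≠ m' →
      ¬ ∃ θ : ℂ, ‖θ‖ = 1 ∧ θ • rep m = rep m' := by
    intro m m' hne ⟨θ, hθ, heq⟩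
    exact hne (Quotient.out_equiv_out.1 ⟨θ, hθ, heq⟩)
  have hrep_mk : ∀ (u : P) (hu : u ∈ Ext),
      ∃ θ : ℂ, ‖θ‖ = 1 ∧ θ • rep (Quotient.mk sE ⟨u, hu⟩) = u := by
    intro u hu
    obtain ⟨θ, hθ, heq⟩ := Quotient.mk_out (s := sE) (⟨u, hu⟩ : ↥Ext)
    exact ⟨θ, hθ, heq⟩
  -- the candidate isometry
  set T : ↥(l10 M) →ₗ[ℂ] P := comboL rep with hT
  have hTnorm : ∀ f, ‖T f‖ = ‖f‖ := by
    intro f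
    have h1 : T f = ∑ m ∈ (cf_finite f).toFinset, cf f m • rep m := combo_eq_sum rep f
    rw [h1, norm_sum_eq ψ hiso hright rep hrepExt hrep_distinct _ (cf f),
      ← norm_eq_sum_cf]
  have hTsurj : Function.Surjective T := by
    intro p
    have hspan := mem_span_extreme ψ hiso p
    have hle : Submodule.span ℂ Ext ≤ LinearMap.range T := by
      rw [Submodule.span_le]
      intro u hu
      obtain ⟨θ, hθ, heq⟩ := hrep_mk u hu
      exact ⟨single10 (Quotient.mk sE ⟨u, hu⟩) θ, by rw [hT]; exact (combo_single rep _ θ).trans heq⟩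
    obtain ⟨f, hf⟩ := hle hspan
    exact ⟨f, hf⟩
  have hTinj : Function.Injective T := by
    intro a b hab
    have : ‖a - b‖ = 0 := by
      rw [← hTnorm, map_sub, hab, sub_self, norm_zero]
    exact sub_eq_zero.1 (norm_eq_zero.1 this)
  set e : ↥(l10 M) ≃ₗ[ℂ] P := LinearEquiv.ofBijective T ⟨hTinj, hTsurj⟩ with he
  refine ⟨M, ⟨?_⟩⟩
  exact (LinearIsometryEquiv.mk e (fun f => hTnorm f)).symm

/-! ### The degenerate case -/

theorem subsingleton_case [Subsingleton P] :
    Nonempty (P ≃ₗᵢ[ℂ] ↥(l10 Empty)) := by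
  have hsub : Subsingleton ↥(l10 Empty) := by infer_instance
  refine ⟨LinearIsometryEquiv.mk ?_ ?_⟩
  · exact
      { toFun := fun _ => 0
        invFun := fun _ => 0
        map_add' := by intros; simp
        map_smul' := by intros; simp
        left_inv := fun x => Subsingleton.elim _ _
        right_inv := fun x => Subsingleton.elim _ _ }
  · intro x
    have hx : x = 0 := Subsingleton.elim _ _
    simp [hx]

end Stmt15Aux
end

open Stmt15Aux in
/-- Every metrically projective normed space is isometrically isomorphic to `l₁⁰(M)` for
some set `M`. Metric projectivity: for every bounded operator `τ : Y → X` between normed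
spaces mapping the closed unit ball of `Y` onto the closed unit ball of `X`, every bounded
operator `φ : P → X` has a lifting `ψ` with `τ ∘ ψ = φ` and `‖ψ‖ = ‖φ‖`. -/
theorem stmt15 (P : Type) [NormedAddCommGroup P] [NormedSpace ℂ P]
    (hP : ∀ (X Y : Type) [NormedAddCommGroup X] [NormedSpace ℂ X]
        [NormedAddCommGroup Y] [NormedSpace ℂ Y] (τ : Y →L[ℂ] X),
      τ '' Metric.closedBall 0 1 = Metric.closedBall (0 : X) 1 →
      ∀ φ : P →L[ℂ] X, ∃ ψ : P →L[ℂ] Y, τ.comp ψ = φ ∧ ‖ψ‖ = ‖φ‖) :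
    ∃ M : Type, Nonempty (P ≃ₗᵢ[ℂ] l10 M) := by
  rcases subsingleton_or_nontrivial P with hsub | hnt
  · exact ⟨Empty, subsingleton_case⟩
  · obtain ⟨ψ, hcomp, hnorm⟩ :=
      hP P ↥(l10 (BallT P)) (tauL (P := P)) tauL_ball (ContinuousLinearMap.id ℂ P)
    have hright : ∀ p, tauFun (ψ p) = p := by
      intro p
      have := ContinuousLinearMap.ext_iff.1 hcomp p
      simpa [tauL_apply] using this
    have hiso : ∀ p, ‖ψ p‖ = ‖p‖ := by
      intro p
      have hle : ‖ψ p‖ ≤ ‖p‖ := by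
        have h1 := ψ.le_opNorm p
        rw [hnorm, ContinuousLinearMap.norm_id] at h1
        simpa using h1
      have hge : ‖p‖ ≤ ‖ψ p‖ := by
        conv_lhs => rw [← hright p]
        exact tauFun_norm_le _
      exact le_antisymm hle hge
    exact nontrivial_case ψ hiso hright
end

section
/- In any category, if a family of natural endotransformations {J_ν} of the identity functor satisfies: each component J_ν^X is a bimorphism, and for each ν there exist λ, μ with J_ν = J_λ J_μ (an asymptotic structure), then: given an asymptotically projective object P, an asymptotically admissible epimorphism τ : Y → X, and a permitted morphism φ : P → X, the set of liftings of φ across τ contains a permitted morphism. -/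
open CategoryTheory

/-- `φ` is a permitted morphism with respect to the family `J` of natural transformations of
the identity functor: `φ = φ̃ ∘ J_ν^X` for some `ν` and `φ̃`. -/
def Permitted {K : Type*} [Category K] {Λ : Type*} (J : Λ → (𝟭 K ⟶ 𝟭 K))
    {X Y : K} (φ : X ⟶ Y) : Prop :=
  ∃ (ν : Λ) (φ' : X ⟶ Y), φ = (J ν).app X ≫ φ'

/-- `τ : Y ⟶ X` is an asymptotically admissible epimorphism: for every `ν` there is
`ρ_ν : □X ⟶ □Y` with `□(τ) ∘ ρ_ν ∘ □(J_ν^X) = □(J_ν^X)`. -/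
def AsymAdm {K L : Type*} [Category K] [Category L] (box : K ⥤ L) {Λ : Type*}
    (J : Λ → (𝟭 K ⟶ 𝟭 K)) {Y X : K} (τ : Y ⟶ X) : Prop :=
  ∀ ν, ∃ ρ : box.obj X ⟶ box.obj Y,
    box.map ((J ν).app X) ≫ ρ ≫ box.map τ = box.map ((J ν).app X)

/-- `P` is asymptotically projective: every permitted morphism from `P` lifts across every
asymptotically admissible epimorphism. -/
def AsymProj {K L : Type*} [Category K] [Category L] (box : K ⥤ L) {Λ : Type*}
    (J : Λ → (𝟭 K ⟶ 𝟭 K)) (P : K) : Prop :=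
  ∀ {Y X : K} (τ : Y ⟶ X), AsymAdm box J τ → ∀ φ : P ⟶ X, Permitted J φ →
    ∃ ψ : P ⟶ Y, ψ ≫ τ = φ

/-- In an asymptotic category (a faithful `□ : 𝒦 ⥤ ℒ` together with a family `{J_ν}` of
natural endotransformations of the identity functor whose components are bimorphisms and
such that each `J_ν` factors as `J_λ J_μ`): if `P` is asymptotically projective,
`τ : Y ⟶ X` is an asymptotically admissible epimorphism and `φ : P ⟶ X` is permitted, then
the set of liftings of `φ` across `τ` contains a permitted morphism. -/
theorem stmt18 {K L : Type*} [Category K] [Category L] (box : K ⥤ L) [box.Faithful]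
    {Λ : Type*} (J : Λ → (𝟭 K ⟶ 𝟭 K))
    (hbi : ∀ (ν : Λ) (X : K), Mono ((J ν).app X) ∧ Epi ((J ν).app X))
    (hcomp : ∀ ν : Λ, ∃ lam mu : Λ, J ν = J lam ≫ J mu)
    (P : K) (hP : AsymProj box J P)
    {Y X : K} (τ : Y ⟶ X) (hτ : AsymAdm box J τ)
    (φ : P ⟶ X) (hφ : Permitted J φ) :
    ∃ ψ : P ⟶ Y, Permitted J ψ ∧ ψ ≫ τ = φ := by
  obtain ⟨ν, φ', hφ'⟩ := hφ
  obtain ⟨lam, mu, hnu⟩ := hcomp ν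
  have hfac : φ = (J lam).app P ≫ ((J mu).app P ≫ φ') := by
    rw [hφ', hnu]; simp [NatTrans.comp_app]
  have hperm : Permitted J ((J mu).app P ≫ φ') := ⟨mu, φ', rfl⟩
  obtain ⟨ψ', hψ'⟩ := hP τ hτ ((J mu).app P ≫ φ') hperm
  exact ⟨(J lam).app P ≫ ψ', ⟨lam, ψ', rfl⟩, by rw [Category.assoc, hψ', hfac]⟩
end

section
/- In a freedom-loving asymptotic category, an object P is asymptotically projective if and only if it is an asymptotic retract of a free object, i.e., there exists a free object F and a morphism σ : F → P such that for every ν there is ζ_ν : P → F with σζ_ν = J_ν^P. -/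
open CategoryTheory

/-- In a freedom-loving asymptotic category, an object `P` is asymptotically projective if
and only if it is an asymptotic retract of a free object: there exist a free object `F`
(an object with bijections `h_ℒ(M, □X) ≅ h_𝒦(F, X)` natural in `X`, for some base `M`)
and a morphism `σ : F ⟶ P` such that for every `ν` there is `ζ_ν : P ⟶ F` with
`σ ∘ ζ_ν = J_ν^P`. -/
theorem stmt19 {K L : Type*} [Category K] [Category L] (box : K ⥤ L) [box.Faithful]
    {Λ : Type*} (J : Λ → (𝟭 K ⟶ 𝟭 K))
    (hbi : ∀ (ν : Λ) (X : K), Mono ((J ν).app X) ∧ Epi ((J ν).app X))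
    (hcomp : ∀ ν : Λ, ∃ lam mu : Λ, J ν = J lam ≫ J mu)
    (hfree : ∀ M : L, ∃ (Fr : K) (e : ∀ X : K, (M ⟶ box.obj X) ≃ (Fr ⟶ X)),
      ∀ {X Y : K} (g : X ⟶ Y) (f : M ⟶ box.obj X), e Y (f ≫ box.map g) = e X f ≫ g)
    (P : K) :
    AsymProj box J P ↔
      ∃ (M : L) (Fr : K) (e : ∀ X : K, (M ⟶ box.obj X) ≃ (Fr ⟶ X)),
        (∀ {X Y : K} (g : X ⟶ Y) (f : M ⟶ box.obj X),
          e Y (f ≫ box.map g) = e X f ≫ g) ∧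
        ∃ σ : Fr ⟶ P, ∀ ν : Λ, ∃ ζ : P ⟶ Fr, ζ ≫ σ = (J ν).app P := by
  constructor
  · intro h
    obtain ⟨Fr, e, he⟩ := hfree (box.obj P)
    set σ : Fr ⟶ P := e P (𝟙 (box.obj P)) with hσ
    set η : box.obj P ⟶ box.obj Fr := (e Fr).symm (𝟙 Fr) with hη
    have hsplit : η ≫ box.map σ = 𝟙 (box.obj P) := by
      apply (e P).injective
      have := he σ η
      rw [this, hη, Equiv.apply_symm_apply, Category.id_comp]
    have hadm : AsymAdm box J σ := by
      intro ν
      exact ⟨η, by rw [hsplit]; simp⟩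
    refine ⟨box.obj P, Fr, e, he, σ, fun ν => ?_⟩
    exact h σ hadm ((J ν).app P) ⟨ν, 𝟙 P, by simp⟩
  · rintro ⟨M, Fr, e, he, σ, hζ⟩
    rintro Y X τ hτ φ ⟨ν, φ', rfl⟩
    obtain ⟨lam, mu, hlm⟩ := hcomp ν
    obtain ⟨ζ, hζmu⟩ := hζ mu
    obtain ⟨ρ, hρ⟩ := hτ lam
    set f : M ⟶ box.obj X := (e X).symm (σ ≫ φ') with hf
    refine ⟨ζ ≫ e Y (f ≫ box.map ((J lam).app X) ≫ ρ), ?_⟩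
    have h1 : e Y (f ≫ box.map ((J lam).app X) ≫ ρ) ≫ τ
        = (J lam).app Fr ≫ σ ≫ φ' := by
      rw [← he τ]
      have h0 : (f ≫ box.map ((J lam).app X) ≫ ρ) ≫ box.map τ
          = f ≫ box.map ((J lam).app X) := by
        simp only [Category.assoc]
        rw [hρ]
      rw [h0]
      have h1 := he ((J lam).app X) f
      simp only [Functor.id_obj] at h1
      rw [h1, hf, Equiv.apply_symm_apply]
      have h2 := (J lam).naturality (σ ≫ φ')
      simp only [Functor.id_map] at h2
      simp only [Functor.id_obj] at h2 ⊢
      rw [← h2]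
    rw [Category.assoc, h1]
    have h2 : ζ ≫ (J lam).app Fr = (J lam).app P ≫ ζ := by
      have := (J lam).naturality ζ
      simpa using this
    rw [← Category.assoc, h2, Category.assoc, ← Category.assoc ζ, hζmu,
      ← Category.assoc, hlm]
    simp
end
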